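/- arXiv:2405.06812 — 3 statements merged into one kernel-verified Lean document; each statement's English description precedes it below -/
import Mathlib

section
/- Let A be the generator of a C₀-semigroup (T_A(t)) on a Banach space X with ‖T_A(t)‖ ≤ M for all t ≥ 0, where M ≥ 1. Let C be a linear operator with D(A) ⊆ D(C) such that ‖C R(μ,A)‖ ≤ K/μ for all μ > 0, for some K > 0. Then A + C generates a C₀-semigroup satisfying ‖T_{A+C}(t)‖ ≤ M e^{MKt} for all t ≥ 0. -/
open Filter Topology Set MeasureTheory intervalIntegral
open scoped NNReal

set_option linter.unusedSectionVars false

variable {X : Type*} [NormedAddCommGroup X] [NormedSpace ℂ X] [CompleteSpace X]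

/-- `T` is a strongly continuous one-parameter semigroup on `[0,∞)`. -/
def IsC0Semigroup (T : ℝ → X →L[ℂ] X) : Prop :=
  T 0 = 1 ∧ (∀ s t : ℝ, 0 ≤ s → 0 ≤ t → T (s + t) = T s ∘L T t) ∧
    ∀ x : X, ContinuousOn (fun t => T t x) (Set.Ici 0)


/-- The (possibly unbounded) operator `A` is the infinitesimal generator of the
C₀-semigroup `T`. -/
def IsGenerator (T : ℝ → X →L[ℂ] X) (A : X →ₗ.[ℂ] X) : Prop :=
  IsC0Semigroup T ∧
    (∀ x : A.domain,
      Tendsto (fun t : ℝ => (t : ℂ)⁻¹ • (T t x - (x : X))) (𝓝[>] 0) (𝓝 (A x))) ∧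
    (∀ x : X,
      (∃ y, Tendsto (fun t : ℝ => (t : ℂ)⁻¹ • (T t x - x)) (𝓝[>] 0) (𝓝 y)) →
        x ∈ A.domain)

/-- `R` is the resolvent `(μ - A)⁻¹` of the operator `A` at the point `μ`. -/
def IsResolventAt (A : X →ₗ.[ℂ] X) (μ : ℂ) (R : X →L[ℂ] X) : Prop :=
  (∀ x : X, ∃ hx : R x ∈ A.domain, μ • R x - A ⟨R x, hx⟩ = x) ∧
    ∀ y : A.domain, R (μ • (y : X) - A y) = (y : X)

/-- `μ` belongs to the resolvent set of `A`. -/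
def InResolventSet (A : X →ₗ.[ℂ] X) (μ : ℂ) : Prop :=
  ∃ R : X →L[ℂ] X, IsResolventAt A μ R

namespace Pert

variable {T : ℝ → X →L[ℂ] X} {M : ℝ}

/-- The semigroup, extended to all of `ℝ` by `T (max t 0)`. -/
noncomputable def Tm (T : ℝ → X →L[ℂ] X) (t : ℝ) : X →L[ℂ] X := T (max t 0)

lemma Tm_eq (T : ℝ → X →L[ℂ] X) {t : ℝ} (ht : 0 ≤ t) : Tm T t = T t := by
  simp [Tm, max_eq_left ht]

lemma Tm_zero (hsg : IsC0Semigroup T) : Tm T 0 = 1 := by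
  simpa [Tm] using hsg.1

lemma Tm_add (hsg : IsC0Semigroup T) {s t : ℝ} (hs : 0 ≤ s) (ht : 0 ≤ t) :
    Tm T (s + t) = (Tm T s) ∘L (Tm T t) := by
  rw [Tm_eq T hs, Tm_eq T ht, Tm_eq T (by linarith)]
  exact hsg.2.1 s t hs ht

lemma Tm_norm (hb : ∀ t : ℝ, 0 ≤ t → ‖T t‖ ≤ M) (t : ℝ) : ‖Tm T t‖ ≤ M :=
  hb _ (le_max_right _ _)

lemma Tm_cont_apply (hsg : IsC0Semigroup T) (x : X) :
    Continuous fun t => Tm T t x := by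
  have h1 : Continuous fun t : ℝ => max t 0 := continuous_id.max continuous_const
  exact (hsg.2.2 x).comp_continuous h1 (fun t => mem_Ici.2 (le_max_right _ _))

lemma Tm_jointCont (hsg : IsC0Semigroup T) (hb : ∀ t : ℝ, 0 ≤ t → ‖T t‖ ≤ M) :
    Continuous fun p : ℝ × X => Tm T p.1 p.2 := by
  rw [continuous_iff_continuousAt]
  rintro ⟨t₀, x₀⟩
  have key : ∀ p : ℝ × X, ‖Tm T p.1 p.2 - Tm T t₀ x₀‖ ≤
      M * ‖p.2 - x₀‖ + ‖Tm T p.1 x₀ - Tm T t₀ x₀‖ := by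
    rintro ⟨t, x⟩
    have : Tm T t x - Tm T t₀ x₀ = Tm T t (x - x₀) + (Tm T t x₀ - Tm T t₀ x₀) := by
      rw [map_sub]; abel
    rw [this]
    refine (norm_add_le _ _).trans (add_le_add_left ?_ _)
    exact ((Tm T t).le_opNorm _).trans
      (mul_le_mul_of_nonneg_right (Tm_norm hb t) (norm_nonneg _))
  have hM0 : 0 ≤ M := le_trans (norm_nonneg _) (Tm_norm hb 0)
  have h2 : Tendsto (fun p : ℝ × X => M * ‖p.2 - x₀‖ + ‖Tm T p.1 x₀ - Tm T t₀ x₀‖)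
      (𝓝 (t₀, x₀)) (𝓝 (M * ‖x₀ - x₀‖ + ‖Tm T t₀ x₀ - Tm T t₀ x₀‖)) := by
    refine Tendsto.add ?_ ?_
    · exact (tendsto_const_nhds.mul ((continuous_snd.sub continuous_const).norm.tendsto _))
    · exact (((Tm_cont_apply hsg x₀).comp continuous_fst).sub continuous_const).norm.tendsto _
  simp only [sub_self, norm_zero, mul_zero, add_zero] at h2
  have : Tendsto (fun p : ℝ × X => Tm T p.1 p.2 - Tm T t₀ x₀) (𝓝 (t₀, x₀)) (𝓝 0) := by
    rw [← norm_zero (E := ℝ)] at h2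
    exact squeeze_zero_norm key (by simpa using h2)
  have := this.add (tendsto_const_nhds (x := Tm T t₀ x₀))
  simpa [ContinuousAt] using this

end Pert

namespace Pert

variable {T : ℝ → X →L[ℂ] X} {M : ℝ} {A : X →ₗ.[ℂ] X}

lemma complex_real_smul_inv (t : ℝ) (v : X) : (t : ℂ)⁻¹ • v = t⁻¹ • v := by
  rw [← Complex.ofReal_inv, Complex.coe_smul]

lemma tendsto_complex_iff_real {f : ℝ → X} {y : X} :
    Tendsto (fun t : ℝ => (t : ℂ)⁻¹ • f t) (𝓝[>] 0) (𝓝 y) ↔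
      Tendsto (fun t : ℝ => t⁻¹ • f t) (𝓝[>] 0) (𝓝 y) := by
  have : (fun t : ℝ => (t : ℂ)⁻¹ • f t) = fun t : ℝ => t⁻¹ • f t := by
    funext t; exact complex_real_smul_inv t (f t)
  rw [this]

lemma gen_tendsto (hA : IsGenerator T A) (y : A.domain) :
    Tendsto (fun t : ℝ => t⁻¹ • (Tm T t ↑y - (y : X))) (𝓝[>] 0) (𝓝 (A y)) := by
  have h := (tendsto_complex_iff_real (f := fun t => T t ↑y - ↑y)).1 (hA.2.1 y)
  refine h.congr' ?_
  filter_upwards [self_mem_nhdsWithin] with t (ht : 0 < t)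
  rw [Tm_eq T ht.le]

lemma mem_domain_of_tendsto (hA : IsGenerator T A) {x y : X}
    (h : Tendsto (fun t : ℝ => t⁻¹ • (Tm T t x - x)) (𝓝[>] 0) (𝓝 y)) :
    x ∈ A.domain := by
  refine hA.2.2 x ⟨y, (tendsto_complex_iff_real (f := fun t => T t x - x)).2 ?_⟩
  refine h.congr' ?_
  filter_upwards [self_mem_nhdsWithin] with t (ht : 0 < t)
  rw [Tm_eq T ht.le]

lemma gen_value (hA : IsGenerator T A) (y : A.domain) {z : X}
    (h : Tendsto (fun t : ℝ => t⁻¹ • (Tm T t ↑y - (y : X))) (𝓝[>] 0) (𝓝 z)) :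
    A y = z :=
  tendsto_nhds_unique (gen_tendsto hA y) h

/-- Differentiability of the orbit map at positive times, for `y` in the domain. -/
lemma hasDerivAt_Tm (hA : IsGenerator T A) (hb : ∀ t : ℝ, 0 ≤ t → ‖T t‖ ≤ M)
    (y : A.domain) {s : ℝ} (hs : 0 < s) :
    HasDerivAt (fun t => Tm T t (y : X)) (Tm T s (A y)) s := by
  have hsg := hA.1
  rw [hasDerivAt_iff_tendsto_slope]
  set w : ℝ → X := fun ε => ε⁻¹ • (Tm T ε ↑y - ↑y) with hw
  have hkey : ∀ t : ℝ, t ≠ s → 0 ≤ t →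
      slope (fun t => Tm T t (y : X)) s t = Tm T (min t s) (w |t - s|) := by
    intro t hts ht
    rcases lt_or_gt_of_ne hts with hlt | hgt
    · have h1 : Tm T s ↑y = Tm T t (Tm T (s - t) ↑y) := by
        have := Tm_add hsg ht (by linarith : (0:ℝ) ≤ s - t)
        rw [show t + (s - t) = s by ring] at this
        rw [this]; rfl
      have habs : |t - s| = s - t := by rw [abs_sub_comm]; exact abs_of_pos (by linarith)
      rw [slope_comm, slope_def_module, h1, habs, min_eq_left hlt.le, hw]
      simp only [ContinuousLinearMap.map_smul_of_tower, ContinuousLinearMap.map_sub]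
    · have h1 : Tm T t ↑y = Tm T s (Tm T (t - s) ↑y) := by
        have := Tm_add hsg hs.le (by linarith : (0:ℝ) ≤ t - s)
        rw [show s + (t - s) = t by ring] at this
        rw [this]; rfl
      have habs : |t - s| = t - s := abs_of_pos (by linarith)
      rw [slope_def_module, h1, habs, min_eq_right hgt.le, hw]
      simp only [ContinuousLinearMap.map_smul_of_tower, ContinuousLinearMap.map_sub]
  have hmem : ∀ᶠ t in 𝓝[≠] s, t ≠ s ∧ 0 ≤ t := by
    have : Ioo (s/2) (2*s) ∈ 𝓝 s := Ioo_mem_nhds (by linarith) (by linarith)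
    filter_upwards [nhdsWithin_le_nhds this, self_mem_nhdsWithin] with t ht1 ht2
    exact ⟨ht2, by nlinarith [ht1.1]⟩
  have heq : slope (fun t => Tm T t (y : X)) s =ᶠ[𝓝[≠] s]
      fun t => Tm T (min t s) (w |t - s|) := by
    filter_upwards [hmem] with t ⟨h1, h2⟩; exact hkey t h1 h2
  rw [tendsto_congr' heq]
  have hw_t : Tendsto (fun t : ℝ => |t - s|) (𝓝[≠] s) (𝓝[>] 0) := by
    apply tendsto_nhdsWithin_of_tendsto_nhds_of_eventually_within
    · have : Tendsto (fun t : ℝ => |t - s|) (𝓝 s) (𝓝 |s - s|) :=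
        ((continuous_id.sub continuous_const).abs).tendsto s
      simpa using this.mono_left nhdsWithin_le_nhds
    · filter_upwards [self_mem_nhdsWithin] with t (ht : t ≠ s)
      exact abs_pos.2 (sub_ne_zero.2 ht)
  have hwlim : Tendsto (fun t : ℝ => w |t - s|) (𝓝[≠] s) (𝓝 (A y)) :=
    (gen_tendsto hA y).comp hw_t
  have hmin : Tendsto (fun t : ℝ => min t s) (𝓝[≠] s) (𝓝 s) := by
    have : Tendsto (fun t : ℝ => min t s) (𝓝 s) (𝓝 (min s s)) :=
      (continuous_id.min continuous_const).tendsto s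
    simpa using this.mono_left nhdsWithin_le_nhds
  have hpair : Tendsto (fun t : ℝ => ((min t s : ℝ), w |t - s|)) (𝓝[≠] s)
      (𝓝 (s, A y)) := hmin.prodMk_nhds hwlim
  exact ((Tm_jointCont hsg hb).tendsto (s, A y)).comp hpair

/-- Averaging: `t⁻¹ ∫₀ᵗ G (t, s) ds → G (0,0)` as `t → 0⁺`, `G` continuous. -/
lemma avg_tendsto {G : ℝ × ℝ → X} (hG : Continuous G) :
    Tendsto (fun t : ℝ => t⁻¹ • ∫ s in (0:ℝ)..t, G (t, s)) (𝓝[>] 0)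
      (𝓝 (G (0, 0))) := by
  rw [Metric.tendsto_nhdsWithin_nhds]
  intro ε hε
  obtain ⟨δ, hδ, hδ'⟩ := Metric.continuousAt_iff.1 (hG.continuousAt (x := ((0:ℝ),(0:ℝ)))) (ε/2) (by linarith)
  refine ⟨min δ 1, by positivity, ?_⟩
  intro t (ht : 0 < t) hdist
  rw [Real.dist_eq, sub_zero, abs_of_pos ht, lt_min_iff] at hdist
  have hint : IntervalIntegrable (fun s => G (t, s)) volume 0 t :=
    (hG.comp (by fun_prop : Continuous fun s : ℝ => ((t:ℝ), s))).intervalIntegrable 0 t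
  have key : ∀ s ∈ Set.uIoc (0:ℝ) t, ‖G (t, s) - G (0, 0)‖ ≤ ε/2 := by
    intro s hs
    rw [uIoc_of_le ht.le] at hs
    have : dist ((t, s) : ℝ × ℝ) (0, 0) < δ := by
      rw [Prod.dist_eq]
      simp only [Real.dist_eq, sub_zero]
      rw [max_lt_iff]
      constructor
      · rw [abs_of_pos ht]; exact hdist.1
      · rw [abs_of_pos hs.1]; exact lt_of_le_of_lt hs.2 hdist.1
    exact (le_of_lt (by simpa [dist_eq_norm] using hδ' this))
  have h1 : (∫ s in (0:ℝ)..t, G (t, s)) - t • G (0, 0) =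
      ∫ s in (0:ℝ)..t, (G (t, s) - G (0, 0)) := by
    rw [intervalIntegral.integral_sub hint (intervalIntegrable_const)]
    simp
  have h2 : ‖∫ s in (0:ℝ)..t, (G (t, s) - G (0, 0))‖ ≤ ε/2 * |t - 0| :=
    intervalIntegral.norm_integral_le_of_norm_le_const key
  rw [dist_eq_norm]
  have : t⁻¹ • (∫ s in (0:ℝ)..t, G (t, s)) - G (0, 0) =
      t⁻¹ • ((∫ s in (0:ℝ)..t, G (t, s)) - t • G (0, 0)) := by
    rw [smul_sub, smul_smul, inv_mul_cancel₀ ht.ne', one_smul]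
  rw [this, h1, norm_smul, norm_inv, Real.norm_eq_abs, abs_of_pos ht]
  calc t⁻¹ * ‖∫ s in (0:ℝ)..t, (G (t, s) - G (0, 0))‖ ≤ t⁻¹ * (ε/2 * |t - 0|) := by
        exact mul_le_mul_of_nonneg_left h2 (by positivity)
    _ = ε/2 := by rw [sub_zero, abs_of_pos ht]; field_simp
    _ < ε := by linarith

end Pert

namespace Pert

variable {T : ℝ → X →L[ℂ] X} {M : ℝ} {A : X →ₗ.[ℂ] X}

lemma exp_tendsto_zero {μ : ℝ} (hμ : 0 < μ) :
    Tendsto (fun s : ℝ => Real.exp (-μ * s)) atTop (𝓝 0) :=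
  Real.tendsto_exp_atBot.comp (tendsto_id.const_mul_atTop_of_neg (neg_neg_iff_pos.2 hμ))

lemma integral_exp_neg_mul {μ : ℝ} (hμ : 0 < μ) :
    ∫ s in Ioi (0:ℝ), Real.exp (-μ * s) = 1/μ := by
  have hderiv : ∀ x ∈ Ici (0:ℝ),
      HasDerivAt (fun s => -Real.exp (-μ * s)/μ) (Real.exp (-μ * x)) x := by
    intro x _
    have := (((hasDerivAt_id x).const_mul (-μ)).exp).neg.div_const μ
    simpa [hμ.ne', mul_comm, div_eq_mul_inv] using this
  have htop : Tendsto (fun s : ℝ => -Real.exp (-μ * s)/μ) atTop (𝓝 0) := by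
    have := ((exp_tendsto_zero hμ).neg).div_const μ
    simpa using this
  have h := integral_Ioi_of_hasDerivAt_of_tendsto'
    (f := fun s => -Real.exp (-μ * s)/μ) hderiv (exp_neg_integrableOn_Ioi 0 hμ) htop
  rw [h]
  simp [neg_div, one_div]

lemma res_cont (hsg : IsC0Semigroup T) (μ : ℝ) (x : X) :
    Continuous fun s => Real.exp (-μ * s) • Tm T s x :=
  (Real.continuous_exp.comp (by fun_prop)).smul (Tm_cont_apply hsg x)

lemma res_integrable (hsg : IsC0Semigroup T) (hb : ∀ t : ℝ, 0 ≤ t → ‖T t‖ ≤ M)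
    {μ : ℝ} (hμ : 0 < μ) (x : X) :
    IntegrableOn (fun s => Real.exp (-μ * s) • Tm T s x) (Ioi 0) := by
  have hM0 : 0 ≤ M := le_trans (norm_nonneg _) (Tm_norm hb 0)
  refine Integrable.mono' ((exp_neg_integrableOn_Ioi 0 hμ).const_mul (M * ‖x‖))
    ((res_cont hsg μ x).aestronglyMeasurable) ?_
  filter_upwards with s
  rw [norm_smul, Real.norm_eq_abs, abs_of_pos (Real.exp_pos _)]
  calc Real.exp (-μ * s) * ‖Tm T s x‖ ≤ Real.exp (-μ * s) * (M * ‖x‖) := by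
        exact mul_le_mul_of_nonneg_left
          (((Tm T s).le_opNorm x).trans
            (mul_le_mul_of_nonneg_right (Tm_norm hb s) (norm_nonneg _)))
          (Real.exp_pos _).le
    _ = M * ‖x‖ * Real.exp (-μ * s) := by ring

lemma integral_Ioi_shift (f : ℝ → X) (t : ℝ) :
    ∫ s in Ioi (0:ℝ), f (s + t) = ∫ u in Ioi t, f u := by
  have h := (measurePreserving_add_right (volume : Measure ℝ) t).setIntegral_preimage_emb
    (measurableEmbedding_addRight t) f (Ioi t)
  have hpre : (fun x : ℝ => x + t) ⁻¹' Ioi t = Ioi 0 := by ext x; simp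
  rw [hpre] at h
  exact h

lemma exists_resolvent (hA : IsGenerator T A) (hb : ∀ t : ℝ, 0 ≤ t → ‖T t‖ ≤ M)
    {μ : ℝ} (hμ : 0 < μ) :
    ∃ R : X →L[ℂ] X, IsResolventAt A (μ : ℂ) R := by
  have hsg := hA.1
  have hM0 : 0 ≤ M := le_trans (norm_nonneg _) (Tm_norm hb 0)
  set F : X → ℝ → X := fun x s => Real.exp (-μ * s) • Tm T s x with hF
  have hFint : ∀ x, IntegrableOn (F x) (Ioi 0) := fun x => res_integrable hsg hb hμ x
  set R₀ : X →ₗ[ℂ] X :=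
    { toFun := fun x => ∫ s in Ioi (0:ℝ), F x s
      map_add' := by
        intro x y
        rw [← integral_add (hFint x) (hFint y)]
        apply setIntegral_congr_fun measurableSet_Ioi
        intro s _
        simp [hF, smul_add]
      map_smul' := by
        intro c x
        simp only [RingHom.id_apply]
        rw [← MeasureTheory.integral_smul]
        apply setIntegral_congr_fun measurableSet_Ioi
        intro s _
        simp [hF, smul_comm c] } with hR₀
  have hRbound : ∀ x, ‖R₀ x‖ ≤ M/μ * ‖x‖ := by
    intro x
    have h1 : ‖R₀ x‖ ≤ ∫ s in Ioi (0:ℝ), M * ‖x‖ * Real.exp (-μ * s) := by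
      refine (MeasureTheory.norm_integral_le_integral_norm _).trans ?_
      refine setIntegral_mono_on ((hFint x).norm)
        ((exp_neg_integrableOn_Ioi 0 hμ).const_mul (M * ‖x‖)) measurableSet_Ioi ?_
      intro s _
      rw [hF]
      simp only
      rw [norm_smul, Real.norm_eq_abs, abs_of_pos (Real.exp_pos _)]
      calc Real.exp (-μ * s) * ‖Tm T s x‖ ≤ Real.exp (-μ * s) * (M * ‖x‖) :=
            mul_le_mul_of_nonneg_left
              (((Tm T s).le_opNorm x).trans
                (mul_le_mul_of_nonneg_right (Tm_norm hb s) (norm_nonneg _)))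
              (Real.exp_pos _).le
        _ = M * ‖x‖ * Real.exp (-μ * s) := by ring
    rw [MeasureTheory.integral_const_mul, integral_exp_neg_mul hμ] at h1
    calc ‖R₀ x‖ ≤ M * ‖x‖ * (1/μ) := h1
      _ = M/μ * ‖x‖ := by ring
  set R : X →L[ℂ] X := R₀.mkContinuous (M/μ) hRbound with hR
  have hRx : ∀ x, R x = ∫ s in Ioi (0:ℝ), F x s := fun _ => rfl
  -- Second resolvent property
  have prop2 : ∀ y : A.domain, R ((μ:ℂ) • (y:X) - A y) = (y:X) := by
    intro y
    set z : X := (μ:ℂ) • (y:X) - A y with hz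
    have hFz : ∀ s : ℝ,
        F z s = Real.exp (-μ * s) • (μ • Tm T s ↑y - Tm T s (A y)) := by
      intro s
      have h : Tm T s z = μ • Tm T s ↑y - Tm T s (A y) := by
        rw [hz, map_sub, ContinuousLinearMap.map_smul, Complex.coe_smul]
      rw [hF]; simp only; rw [h]
    set g : ℝ → X := fun s => -(Real.exp (-μ * s) • Tm T s ↑y) with hg
    have hderiv : ∀ s ∈ Ioi (0:ℝ), HasDerivAt g (F z s) s := by
      intro s hs
      have hs' := mem_Ioi.1 hs
      have h1 : HasDerivAt (fun s : ℝ => Real.exp (-μ * s)) (-μ * Real.exp (-μ * s)) s := by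
        simpa [mul_comm] using ((hasDerivAt_id s).const_mul (-μ)).exp
      have h4 := (h1.smul (hasDerivAt_Tm hA hb y hs')).neg
      convert h4 using 1
      · rfl
      rw [hFz s, smul_sub]
      module
    have hcont : ContinuousWithinAt g (Ici 0) 0 :=
      ((res_cont hsg μ (↑y : X)).neg).continuousWithinAt
    have htop : Tendsto g atTop (𝓝 0) := by
      have hbnd : ∀ s : ℝ, ‖g s‖ ≤ M * ‖(y:X)‖ * Real.exp (-μ * s) := by
        intro s
        rw [hg]
        simp only [norm_neg]
        rw [norm_smul, Real.norm_eq_abs, abs_of_pos (Real.exp_pos _)]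
        calc Real.exp (-μ * s) * ‖Tm T s ↑y‖ ≤ Real.exp (-μ * s) * (M * ‖(y:X)‖) :=
              mul_le_mul_of_nonneg_left
                (((Tm T s).le_opNorm _).trans
                  (mul_le_mul_of_nonneg_right (Tm_norm hb s) (norm_nonneg _)))
                (Real.exp_pos _).le
          _ = M * ‖(y:X)‖ * Real.exp (-μ * s) := by ring
      refine squeeze_zero_norm hbnd ?_
      simpa using (exp_tendsto_zero hμ).const_mul (M * ‖(y:X)‖)
    have hint := integral_Ioi_of_hasDerivAt_of_tendsto hcont hderiv (hFint z) htop
    rw [hRx, hint, hg]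
    simp [Tm_zero hsg]
  -- First resolvent property
  have prop1 : ∀ x : X, ∃ hx : R x ∈ A.domain, (μ:ℂ) • R x - A ⟨R x, hx⟩ = x := by
    intro x
    have hTt : ∀ t : ℝ, 0 ≤ t →
        Tm T t (R x) = Real.exp (μ * t) • (R x - ∫ s in (0:ℝ)..t, F x s) := by
      intro t ht
      have h1 : Tm T t (R x) = ∫ s in Ioi (0:ℝ), Tm T t (F x s) := by
        rw [hRx]
        exact (ContinuousLinearMap.integral_comp_comm _ (hFint x)).symm
      have h2 : ∫ s in Ioi (0:ℝ), Tm T t (F x s)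
          = ∫ s in Ioi (0:ℝ), (fun u => Real.exp (-μ * (u - t)) • Tm T u x) (s + t) := by
        apply setIntegral_congr_fun measurableSet_Ioi
        intro s hs
        have hadd : Tm T (s + t) = (Tm T t) ∘L (Tm T s) := by
          rw [add_comm s t]; exact Tm_add hsg ht (le_of_lt hs)
        simp only [hF, ContinuousLinearMap.map_smul_of_tower, add_sub_cancel_right]
        rw [hadd]; rfl
      have h3 : ∫ s in Ioi (0:ℝ), (fun u => Real.exp (-μ * (u - t)) • Tm T u x) (s + t)
          = ∫ u in Ioi t, Real.exp (-μ * (u - t)) • Tm T u x :=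
        integral_Ioi_shift (fun u => Real.exp (-μ * (u - t)) • Tm T u x) t
      have h4 : (fun u => Real.exp (-μ * (u - t)) • Tm T u x)
          = fun u => Real.exp (μ * t) • F x u := by
        funext u
        rw [hF]
        simp only [smul_smul]
        congr 1
        rw [← Real.exp_add]
        ring_nf
      have h5 : ∫ u in Ioi t, Real.exp (μ * t) • F x u
          = Real.exp (μ * t) • ∫ u in Ioi t, F x u := MeasureTheory.integral_smul _ _
      have hsplit : ∫ u in Ioi (0:ℝ), F x u
          = (∫ u in (0:ℝ)..t, F x u) + ∫ u in Ioi t, F x u := by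
        rw [intervalIntegral.integral_of_le ht,
          ← setIntegral_union (Ioc_disjoint_Ioi le_rfl) measurableSet_Ioi
            ((hFint x).mono_set Ioc_subset_Ioi_self) ((hFint x).mono_set (Ioi_subset_Ioi ht)),
          Ioc_union_Ioi_eq_Ioi ht]
      rw [h1, h2, h3, h4, h5]
      congr 1
      rw [hRx, hsplit]
      abel
    have hexp : Tendsto (fun t : ℝ => t⁻¹ * (Real.exp (μ * t) - 1)) (𝓝[>] 0) (𝓝 μ) := by
      have hD : HasDerivAt (fun t : ℝ => Real.exp (μ * t)) μ 0 := by
        simpa using ((hasDerivAt_id (0:ℝ)).const_mul μ).exp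
      have h := hasDerivAt_iff_tendsto_slope.1 hD
      have h2 : Tendsto (slope (fun t : ℝ => Real.exp (μ * t)) 0) (𝓝[>] 0) (𝓝 μ) :=
        h.mono_left (nhdsWithin_mono _ fun t ht => ne_of_gt ht)
      refine h2.congr fun t => ?_
      rw [slope_def_module]
      simp [smul_eq_mul]
    have hexp1 : Tendsto (fun t : ℝ => Real.exp (μ * t)) (𝓝[>] 0) (𝓝 1) := by
      have : Tendsto (fun t : ℝ => Real.exp (μ * t)) (𝓝 0) (𝓝 (Real.exp (μ * 0))) :=
        (Real.continuous_exp.comp (continuous_const.mul continuous_id)).tendsto 0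
      simpa using this.mono_left nhdsWithin_le_nhds
    have hftc : Tendsto (fun t : ℝ => t⁻¹ • ∫ s in (0:ℝ)..t, F x s) (𝓝[>] 0) (𝓝 x) := by
      have h := avg_tendsto (G := fun p : ℝ × ℝ => F x p.2)
        ((res_cont hsg μ x).comp continuous_snd)
      simp only [hF] at h ⊢
      simpa [Tm_zero hsg] using h
    have hmain : Tendsto (fun t : ℝ => t⁻¹ • (Tm T t (R x) - R x)) (𝓝[>] 0)
        (𝓝 (μ • R x - x)) := by
      have heq : (fun t : ℝ => t⁻¹ • (Tm T t (R x) - R x)) =ᶠ[𝓝[>] 0]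
          fun t => (t⁻¹ * (Real.exp (μ * t) - 1)) • R x
            - Real.exp (μ * t) • (t⁻¹ • ∫ s in (0:ℝ)..t, F x s) := by
        filter_upwards [self_mem_nhdsWithin] with t (ht : 0 < t)
        rw [hTt t ht.le, smul_sub]
        module
      have hlim : Tendsto (fun t : ℝ => (t⁻¹ * (Real.exp (μ * t) - 1)) • R x
          - Real.exp (μ * t) • (t⁻¹ • ∫ s in (0:ℝ)..t, F x s)) (𝓝[>] 0)
          (𝓝 (μ • R x - (1:ℝ) • x)) :=
        (hexp.smul_const (R x)).sub (hexp1.smul hftc)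
      rw [one_smul] at hlim
      exact hlim.congr' heq.symm
    have hdomRx : R x ∈ A.domain := mem_domain_of_tendsto hA hmain
    have hval : A ⟨R x, hdomRx⟩ = μ • R x - x := gen_value hA ⟨R x, hdomRx⟩ hmain
    refine ⟨hdomRx, ?_⟩
    rw [hval, Complex.coe_smul]
    abel
  exact ⟨R, prop1, prop2⟩

end Pert

namespace Pert

variable {T : ℝ → X →L[ℂ] X} {M K : ℝ} {A C : X →ₗ.[ℂ] X}

lemma C_bound (hA : IsGenerator T A) (hb : ∀ t : ℝ, 0 ≤ t → ‖T t‖ ≤ M)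
    (hdom : A.domain ≤ C.domain) (hK : 0 < K)
    (hCR : ∀ μ : ℝ, 0 < μ → ∀ R : X →L[ℂ] X, IsResolventAt A (μ : ℂ) R →
      ∀ x : X, ∀ hx : R x ∈ C.domain, ‖C ⟨R x, hx⟩‖ ≤ K / μ * ‖x‖) :
    ∀ y : A.domain, ‖C ⟨(y : X), hdom y.2⟩‖ ≤ K * ‖(y : X)‖ := by
  intro y
  have key2 : ∀ μ : ℝ, 0 < μ → ‖C ⟨(y : X), hdom y.2⟩‖ ≤ K * ‖(y:X)‖ + K/μ * ‖A y‖ := by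
    intro μ hμ
    obtain ⟨R, hR⟩ := exists_resolvent hA hb hμ
    have h2 := hR.2 y
    set v : X := (μ:ℂ) • (y:X) - A y with hv
    have hmem : R v ∈ C.domain := by rw [h2]; exact hdom y.2
    have hkey := hCR μ hμ R hR v hmem
    have heq : C ⟨R v, hmem⟩ = C ⟨(y : X), hdom y.2⟩ := by
      congr 1
      exact Subtype.ext h2
    rw [heq] at hkey
    refine hkey.trans ?_
    have hvnorm : ‖v‖ ≤ μ * ‖(y:X)‖ + ‖A y‖ := by
      refine (norm_sub_le _ _).trans ?_
      rw [norm_smul, Complex.norm_real, Real.norm_eq_abs, abs_of_pos hμ]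
    calc K/μ * ‖v‖ ≤ K/μ * (μ * ‖(y:X)‖ + ‖A y‖) :=
          mul_le_mul_of_nonneg_left hvnorm (by positivity)
      _ = K * ‖(y:X)‖ + K/μ * ‖A y‖ := by field_simp
  have hlim : Tendsto (fun μ : ℝ => K * ‖(y:X)‖ + K/μ * ‖A y‖) atTop
      (𝓝 (K * ‖(y:X)‖)) := by
    have h1 : Tendsto (fun μ : ℝ => K/μ) atTop (𝓝 0) := by
      simpa [div_eq_mul_inv] using tendsto_inv_atTop_zero.const_mul K
    have h2 : Tendsto (fun μ : ℝ => K * ‖(y:X)‖ + K/μ * ‖A y‖) atTop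
        (𝓝 (K * ‖(y:X)‖ + 0 * ‖A y‖)) :=
      (tendsto_const_nhds (x := K * ‖(y:X)‖)).add (h1.mul_const ‖A y‖)
    simpa using h2
  exact ge_of_tendsto hlim ((eventually_gt_atTop 0).mono fun μ hμ => key2 μ hμ)

lemma mem_domain_avg (hA : IsGenerator T A) (x : X) {h : ℝ} (hh : 0 < h) :
    (h⁻¹ • ∫ s in (0:ℝ)..h, Tm T s x) ∈ A.domain := by
  have hsg := hA.1
  have hcx : Continuous fun s => Tm T s x := Tm_cont_apply hsg x
  set xh : X := h⁻¹ • ∫ s in (0:ℝ)..h, Tm T s x with hxh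
  have hTt : ∀ t : ℝ, 0 ≤ t →
      Tm T t xh = h⁻¹ • ∫ u in t..(t + h), Tm T u x := by
    intro t ht
    rw [hxh, ContinuousLinearMap.map_smul_of_tower,
      ← (Tm T t).intervalIntegral_comp_comm (hcx.intervalIntegrable 0 h)]
    congr 1
    have h1 : ∀ s, s ∈ uIcc (0:ℝ) h → Tm T t (Tm T s x) = Tm T (s + t) x := by
      intro s hs
      rw [uIcc_of_le hh.le] at hs
      rw [add_comm s t, Tm_add hsg ht hs.1]; rfl
    rw [intervalIntegral.integral_congr h1]
    have := intervalIntegral.integral_comp_add_right (a := (0:ℝ)) (b := h)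
      (fun u => Tm T u x) t
    rw [this, zero_add, add_comm h t]
  have hlim : Tendsto (fun t : ℝ => t⁻¹ • (Tm T t xh - xh)) (𝓝[>] 0)
      (𝓝 (h⁻¹ • (Tm T h x - x))) := by
    have heq : (fun t : ℝ => t⁻¹ • (Tm T t xh - xh)) =ᶠ[𝓝[>] 0]
        fun t => h⁻¹ • (t⁻¹ • ((∫ u in h..(h + t), Tm T u x) - ∫ u in (0:ℝ)..t, Tm T u x)) := by
      filter_upwards [self_mem_nhdsWithin] with t (ht : 0 < t)
      rw [hTt t ht.le, hxh]
      have hsplit : (∫ u in t..(t + h), Tm T u x) - ∫ u in (0:ℝ)..h, Tm T u x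
          = (∫ u in h..(h + t), Tm T u x) - ∫ u in (0:ℝ)..t, Tm T u x := by
        have i1 : (∫ u in (0:ℝ)..t, Tm T u x) + ∫ u in t..(t+h), Tm T u x
            = ∫ u in (0:ℝ)..(t+h), Tm T u x :=
          intervalIntegral.integral_add_adjacent_intervals
            (hcx.intervalIntegrable _ _) (hcx.intervalIntegrable _ _)
        have i2 : (∫ u in (0:ℝ)..h, Tm T u x) + ∫ u in h..(h+t), Tm T u x
            = ∫ u in (0:ℝ)..(h+t), Tm T u x :=
          intervalIntegral.integral_add_adjacent_intervals
            (hcx.intervalIntegrable _ _) (hcx.intervalIntegrable _ _)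
        rw [add_comm t h] at i1
        rw [← i2] at i1
        have i3 : (∫ u in t..(t+h), Tm T u x) + ∫ u in (0:ℝ)..t, Tm T u x
            = (∫ u in h..(h+t), Tm T u x) + ∫ u in (0:ℝ)..h, Tm T u x := by
          rw [add_comm t h, add_comm (∫ u in t..(h+t), Tm T u x), i1, add_comm]
        rw [sub_eq_sub_iff_add_eq_add]
        exact i3
      rw [← smul_sub, ← hsplit, smul_comm]
    rw [tendsto_congr' heq]
    have h1 : Tendsto (fun t : ℝ => t⁻¹ • ∫ u in h..(h + t), Tm T u x) (𝓝[>] 0)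
        (𝓝 (Tm T h x)) := by
      have hshift : ∀ t : ℝ, (∫ u in h..(h + t), Tm T u x) = ∫ s in (0:ℝ)..t, Tm T (h + s) x := by
        intro t
        have := intervalIntegral.integral_comp_add_left (a := (0:ℝ)) (b := t)
          (fun u => Tm T u x) h
        rw [this, add_zero]
      simp only [hshift]
      have := avg_tendsto (G := fun p : ℝ × ℝ => Tm T (h + p.2) x)
        ((Tm_cont_apply hsg x).comp (continuous_const.add continuous_snd))
      simpa using this
    have h2 : Tendsto (fun t : ℝ => t⁻¹ • ∫ u in (0:ℝ)..t, Tm T u x) (𝓝[>] 0) (𝓝 x) := by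
      have := avg_tendsto (G := fun p : ℝ × ℝ => Tm T p.2 x)
        ((Tm_cont_apply hsg x).comp continuous_snd)
      simpa [Tm_zero hsg] using this
    have h3 := (h1.sub h2).const_smul (h⁻¹)
    refine h3.congr fun t => ?_
    module
  exact mem_domain_of_tendsto hA hlim

lemma domain_dense (hA : IsGenerator T A) : Dense (A.domain : Set X) := by
  intro x
  have hlim : Tendsto (fun h : ℝ => h⁻¹ • ∫ s in (0:ℝ)..h, Tm T s x) (𝓝[>] 0) (𝓝 x) := by
    have := avg_tendsto (G := fun p : ℝ × ℝ => Tm T p.2 x)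
      ((Tm_cont_apply hA.1 x).comp continuous_snd)
    simpa [Tm_zero hA.1] using this
  exact mem_closure_of_tendsto hlim
    (eventually_mem_nhdsWithin.mono fun h hh => mem_domain_avg hA x hh)

lemma exists_B (hA : IsGenerator T A) (hdom : A.domain ≤ C.domain) (hK : 0 < K)
    (hCb : ∀ y : A.domain, ‖C ⟨(y : X), hdom y.2⟩‖ ≤ K * ‖(y : X)‖) :
    ∃ B : X →L[ℂ] X, ‖B‖ ≤ K ∧ ∀ y : A.domain, B (y : X) = C ⟨(y : X), hdom y.2⟩ := by
  set f₀ : A.domain →ₗ[ℂ] X := C.toFun.comp (Submodule.inclusion hdom) with hf₀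
  have hf₀eq : ∀ y : A.domain, f₀ y = C ⟨(y : X), hdom y.2⟩ := fun y => rfl
  set f : A.domain →L[ℂ] X := f₀.mkContinuous K (fun y => by rw [hf₀eq]; exact hCb y) with hf
  set e : A.domain →L[ℂ] X := A.domain.subtypeL with he
  have h_dense : DenseRange e := by
    have : range e = (A.domain : Set X) := by
      ext u; simp [he, Submodule.subtypeL]
    rw [DenseRange, this]
    exact domain_dense hA
  have h_e : ∀ y : A.domain, ‖y‖ ≤ (1 : ℝ≥0) * ‖e y‖ := by
    intro y; simp [he]
  refine ⟨f.extend e, ?_, ?_⟩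
  · refine le_trans (f.opNorm_extend_le h_dense h_e) ?_
    have h2 : ‖f‖ ≤ K := f₀.mkContinuous_norm_le hK.le _
    rw [NNReal.coe_one, one_mul]
    exact h2
  · intro y
    have h5 := ContinuousLinearMap.extend_eq f h_dense
      (ContinuousLinearMap.isUniformEmbedding_of_bound _ h_e).isUniformInducing y
    exact h5.trans (hf₀eq y)

end Pert

namespace Pert

variable {T : ℝ → X →L[ℂ] X} {M K : ℝ} {A C : X →ₗ.[ℂ] X}

/-- The terms of the Dyson series for the perturbed semigroup. -/
noncomputable def dysonF (T : ℝ → X →L[ℂ] X) (B : X →L[ℂ] X) : ℕ → ℝ → X → X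
  | 0 => fun t x => Tm T t x
  | (n+1) => fun t x => ∫ s in (0:ℝ)..(max t 0), Tm T (t - s) (B (dysonF T B n s x))

variable {B : X →L[ℂ] X}

lemma dysonF_cont (hsg : IsC0Semigroup T) (hb : ∀ t : ℝ, 0 ≤ t → ‖T t‖ ≤ M)
    (n : ℕ) (x : X) : Continuous fun t => dysonF T B n t x := by
  induction n with
  | zero => exact Tm_cont_apply hsg x
  | succ n ih =>
    show Continuous fun t => ∫ s in (0:ℝ)..(max t 0), Tm T (t - s) (B (dysonF T B n s x))
    have hmap : Continuous (fun p : ℝ × ℝ => ((p.1 - p.2, B (dysonF T B n p.2 x)) : ℝ × X)) :=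
      (continuous_fst.sub continuous_snd).prodMk
        (B.continuous.comp (ih.comp continuous_snd))
    have hF : Continuous (fun p : ℝ × ℝ => Tm T (p.1 - p.2) (B (dysonF T B n p.2 x))) :=
      (Tm_jointCont hsg hb).comp hmap
    exact continuous_parametric_intervalIntegral_of_continuous
      (f := fun t s => Tm T (t - s) (B (dysonF T B n s x))) hF
      (continuous_id.max continuous_const)

lemma dysonF_integrand_cont (hsg : IsC0Semigroup T) (hb : ∀ t : ℝ, 0 ≤ t → ‖T t‖ ≤ M)
    (n : ℕ) (x : X) (t : ℝ) :
    Continuous fun s => Tm T (t - s) (B (dysonF T B n s x)) := by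
  exact (Tm_jointCont hsg hb).comp
    ((continuous_const.sub continuous_id).prodMk
      (B.continuous.comp ((dysonF_cont hsg hb n x).comp continuous_id)))

lemma dysonF_add (hsg : IsC0Semigroup T) (hb : ∀ t : ℝ, 0 ≤ t → ‖T t‖ ≤ M)
    (n : ℕ) (t : ℝ) (x y : X) :
    dysonF T B n t (x + y) = dysonF T B n t x + dysonF T B n t y := by
  induction n generalizing t with
  | zero => exact (Tm T t).map_add x y
  | succ n ih =>
    show (∫ s in (0:ℝ)..(max t 0), Tm T (t - s) (B (dysonF T B n s (x + y))))
      = (∫ s in (0:ℝ)..(max t 0), Tm T (t - s) (B (dysonF T B n s x)))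
        + ∫ s in (0:ℝ)..(max t 0), Tm T (t - s) (B (dysonF T B n s y))
    rw [← intervalIntegral.integral_add
      ((dysonF_integrand_cont hsg hb n x t).intervalIntegrable _ _)
      ((dysonF_integrand_cont hsg hb n y t).intervalIntegrable _ _)]
    apply intervalIntegral.integral_congr
    intro s _
    simp only [ih s, map_add]

lemma dysonF_smul (hsg : IsC0Semigroup T) (hb : ∀ t : ℝ, 0 ≤ t → ‖T t‖ ≤ M)
    (n : ℕ) (t : ℝ) (c : ℂ) (x : X) :
    dysonF T B n t (c • x) = c • dysonF T B n t x := by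
  induction n generalizing t with
  | zero => exact (Tm T t).map_smul c x
  | succ n ih =>
    show (∫ s in (0:ℝ)..(max t 0), Tm T (t - s) (B (dysonF T B n s (c • x))))
      = c • ∫ s in (0:ℝ)..(max t 0), Tm T (t - s) (B (dysonF T B n s x))
    rw [← intervalIntegral.integral_smul]
    apply intervalIntegral.integral_congr
    intro s _
    simp only [ih s, ContinuousLinearMap.map_smul]

lemma dysonF_norm_le (hsg : IsC0Semigroup T) (hb : ∀ t : ℝ, 0 ≤ t → ‖T t‖ ≤ M)
    (hBK : ‖B‖ ≤ K) (hK0 : 0 ≤ K) (n : ℕ) (t : ℝ) (x : X) :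
    ‖dysonF T B n t x‖ ≤ M * (M * K * max t 0) ^ n / n.factorial * ‖x‖ := by
  have hM0 : 0 ≤ M := le_trans (norm_nonneg _) (Tm_norm hb 0)
  induction n generalizing t with
  | zero =>
    show ‖Tm T t x‖ ≤ M * (M * K * max t 0) ^ 0 / (0:ℕ).factorial * ‖x‖
    simp only [pow_zero, Nat.factorial_zero, Nat.cast_one, mul_one, div_one]
    exact ((Tm T t).le_opNorm x).trans
      (mul_le_mul_of_nonneg_right (Tm_norm hb t) (norm_nonneg _))
  | succ n ih =>
    show ‖∫ s in (0:ℝ)..(max t 0), Tm T (t - s) (B (dysonF T B n s x))‖ ≤ _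
    rcases le_or_gt t 0 with ht | ht
    · rw [max_eq_right ht, intervalIntegral.integral_same]
      have : (0:ℝ) ≤ M * (M * K * max t 0) ^ (n+1) / (n+1).factorial * ‖x‖ := by
        positivity
      simpa using this
    · rw [max_eq_left ht.le]
      have hbnd : ∀ᵐ s ∂(volume.restrict (Set.uIoc (0:ℝ) t)),
          ‖Tm T (t - s) (B (dysonF T B n s x))‖
            ≤ M * K * (M * (M * K * s) ^ n / n.factorial * ‖x‖) := by
        rw [ae_restrict_iff' measurableSet_uIoc]
        filter_upwards with s hs
        rw [uIoc_of_le ht.le] at hs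
        have h1 : ‖Tm T (t - s) (B (dysonF T B n s x))‖ ≤ M * ‖B (dysonF T B n s x)‖ :=
          ((Tm T (t-s)).le_opNorm _).trans
            (mul_le_mul_of_nonneg_right (Tm_norm hb _) (norm_nonneg _))
        have h2 : ‖B (dysonF T B n s x)‖ ≤ K * ‖dysonF T B n s x‖ :=
          (B.le_opNorm _).trans (mul_le_mul_of_nonneg_right hBK (norm_nonneg _))
        have h3 := ih s
        rw [max_eq_left hs.1.le] at h3
        calc ‖Tm T (t - s) (B (dysonF T B n s x))‖ ≤ M * (K * ‖dysonF T B n s x‖) :=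
              h1.trans (mul_le_mul_of_nonneg_left h2 hM0)
          _ ≤ M * (K * (M * (M * K * s) ^ n / n.factorial * ‖x‖)) := by
              have hK' : 0 ≤ K := hK0
              gcongr
          _ = M * K * (M * (M * K * s) ^ n / n.factorial * ‖x‖) := by ring
      have hgint : IntervalIntegrable
          (fun s => M * K * (M * (M * K * s) ^ n / n.factorial * ‖x‖)) volume 0 t := by
        apply Continuous.intervalIntegrable
        fun_prop
      have hle := intervalIntegral.norm_integral_le_abs_of_norm_le hbnd hgint
      have hval : ∫ s in (0:ℝ)..t, M * K * (M * (M * K * s) ^ n / n.factorial * ‖x‖)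
          = M * (M * K * t) ^ (n+1) / (n+1).factorial * ‖x‖ := by
        have h4 : (fun s : ℝ => M * K * (M * (M * K * s) ^ n / n.factorial * ‖x‖))
            = fun s : ℝ => (M * K * (M * (M*K)^n / n.factorial * ‖x‖)) * s ^ n := by
          funext s
          ring
        rw [h4, intervalIntegral.integral_const_mul, integral_pow]
        rw [Nat.factorial_succ]
        push_cast
        field_simp
        ring
      rw [hval] at hle
      refine hle.trans ?_
      rw [abs_of_nonneg (by positivity)]

end Pert

namespace Pert

variable {T : ℝ → X →L[ℂ] X} {M K : ℝ} {B : X →L[ℂ] X}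

lemma dysonF_summable_norm (hsg : IsC0Semigroup T) (hb : ∀ t : ℝ, 0 ≤ t → ‖T t‖ ≤ M)
    (hBK : ‖B‖ ≤ K) (hK0 : 0 ≤ K) (t : ℝ) (x : X) :
    Summable fun n : ℕ => M * (M * K * max t 0) ^ n / n.factorial * ‖x‖ := by
  have h : (fun n : ℕ => M * (M * K * max t 0) ^ n / n.factorial * ‖x‖)
      = fun n : ℕ => (M * ‖x‖) * ((M * K * max t 0) ^ n / n.factorial) := by
    funext n; ring
  rw [h]
  exact (Real.summable_pow_div_factorial (M * K * max t 0)).mul_left (M * ‖x‖)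

lemma dysonF_summable (hsg : IsC0Semigroup T) (hb : ∀ t : ℝ, 0 ≤ t → ‖T t‖ ≤ M)
    (hBK : ‖B‖ ≤ K) (hK0 : 0 ≤ K) (t : ℝ) (x : X) :
    Summable fun n => dysonF T B n t x :=
  Summable.of_norm_bounded (dysonF_summable_norm hsg hb hBK hK0 t x)
    (fun n => dysonF_norm_le hsg hb hBK hK0 n t x)

lemma exp_tsum (q : ℝ) : Real.exp q = ∑' n : ℕ, q ^ n / n.factorial := by
  rw [Real.exp_eq_exp_ℝ, NormedSpace.exp_eq_tsum_div]

/-- The perturbed semigroup, defined by the Dyson series. -/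
noncomputable def SL (T : ℝ → X →L[ℂ] X) (B : X →L[ℂ] X) {M K : ℝ}
    (hsg : IsC0Semigroup T) (hb : ∀ t : ℝ, 0 ≤ t → ‖T t‖ ≤ M)
    (hBK : ‖B‖ ≤ K) (hK0 : 0 ≤ K) (t : ℝ) : X →L[ℂ] X :=
  LinearMap.mkContinuous
    { toFun := fun x => ∑' n, dysonF T B n t x
      map_add' := fun x y => by
        rw [← Summable.tsum_add (dysonF_summable hsg hb hBK hK0 t x)
          (dysonF_summable hsg hb hBK hK0 t y)]
        exact tsum_congr fun n => dysonF_add hsg hb n t x y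
      map_smul' := fun c x => by
        simp only [RingHom.id_apply]
        rw [← Summable.tsum_const_smul c (dysonF_summable hsg hb hBK hK0 t x)]
        exact tsum_congr fun n => dysonF_smul hsg hb n t c x }
    (M * Real.exp (M * K * max t 0))
    (fun x => by
      simp only [LinearMap.coe_mk, AddHom.coe_mk]
      refine (norm_tsum_le_tsum_norm ((dysonF_summable_norm hsg hb hBK hK0 t x).of_nonneg_of_le
        (fun n => norm_nonneg _) (fun n => dysonF_norm_le hsg hb hBK hK0 n t x))).trans ?_
      have h1 : ∑' n : ℕ, ‖dysonF T B n t x‖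
          ≤ ∑' n : ℕ, M * (M * K * max t 0) ^ n / n.factorial * ‖x‖ :=
        Summable.tsum_le_tsum (fun n => dysonF_norm_le hsg hb hBK hK0 n t x)
          ((dysonF_summable_norm hsg hb hBK hK0 t x).of_nonneg_of_le
            (fun n => norm_nonneg _) (fun n => dysonF_norm_le hsg hb hBK hK0 n t x))
          (dysonF_summable_norm hsg hb hBK hK0 t x)
      refine h1.trans ?_
      have h2 : (fun n : ℕ => M * (M * K * max t 0) ^ n / n.factorial * ‖x‖)
          = fun n : ℕ => (M * ‖x‖) * ((M * K * max t 0) ^ n / n.factorial) := by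
        funext n; ring
      rw [h2, tsum_mul_left, ← exp_tsum]
      calc M * ‖x‖ * Real.exp (M * K * max t 0)
          = M * Real.exp (M * K * max t 0) * ‖x‖ := by ring
        _ ≤ M * Real.exp (M * K * max t 0) * ‖x‖ := le_rfl)

lemma SL_apply (hsg : IsC0Semigroup T) (hb : ∀ t : ℝ, 0 ≤ t → ‖T t‖ ≤ M)
    (hBK : ‖B‖ ≤ K) (hK0 : 0 ≤ K) (t : ℝ) (x : X) :
    SL T B hsg hb hBK hK0 t x = ∑' n, dysonF T B n t x := rfl

lemma SL_norm (hsg : IsC0Semigroup T) (hb : ∀ t : ℝ, 0 ≤ t → ‖T t‖ ≤ M)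
    (hBK : ‖B‖ ≤ K) (hK0 : 0 ≤ K) (hM0 : 0 ≤ M) (t : ℝ) :
    ‖SL T B hsg hb hBK hK0 t‖ ≤ M * Real.exp (M * K * max t 0) :=
  LinearMap.mkContinuous_norm_le _ (by positivity) _

lemma SL_zero (hsg : IsC0Semigroup T) (hb : ∀ t : ℝ, 0 ≤ t → ‖T t‖ ≤ M)
    (hBK : ‖B‖ ≤ K) (hK0 : 0 ≤ K) :
    SL T B hsg hb hBK hK0 0 = 1 := by
  ext x
  rw [SL_apply]
  rw [Summable.tsum_eq_zero_add (dysonF_summable hsg hb hBK hK0 0 x)]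
  have h0 : dysonF T B 0 (0:ℝ) x = x := by
    show Tm T 0 x = x
    rw [Tm_zero hsg]; rfl
  have hsucc : ∀ n : ℕ, dysonF T B (n+1) (0:ℝ) x = 0 := by
    intro n
    show (∫ s in (0:ℝ)..(max (0:ℝ) 0), Tm T ((0:ℝ) - s) (B (dysonF T B n s x))) = 0
    simp
  simp only [h0, hsucc, tsum_zero, add_zero]
  rfl

lemma SL_cont (hsg : IsC0Semigroup T) (hb : ∀ t : ℝ, 0 ≤ t → ‖T t‖ ≤ M)
    (hBK : ‖B‖ ≤ K) (hK0 : 0 ≤ K) (hM0 : 0 ≤ M) (x : X) :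
    Continuous fun t => SL T B hsg hb hBK hK0 t x := by
  rw [continuous_iff_continuousAt]
  intro t₀
  have hsub : Icc (t₀ - 1) (t₀ + 1) ∈ 𝓝 t₀ := Icc_mem_nhds (by linarith) (by linarith)
  refine ContinuousOn.continuousAt ?_ hsub
  have hc : ContinuousOn (fun t => ∑' n, dysonF T B n t x) (Icc (t₀ - 1) (t₀ + 1)) := by
    refine continuousOn_tsum (fun n => (dysonF_cont hsg hb n x).continuousOn)
      (dysonF_summable_norm hsg hb hBK hK0 (|t₀| + 1) x) ?_
    intro n t ht
    refine (dysonF_norm_le hsg hb hBK hK0 n t x).trans ?_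
    have hmax : max t 0 ≤ max (|t₀| + 1) 0 := by
      refine max_le_max ?_ le_rfl
      calc t ≤ t₀ + 1 := ht.2
        _ ≤ |t₀| + 1 := by have := le_abs_self t₀; linarith
    gcongr
  exact hc

end Pert

namespace Pert

variable {T : ℝ → X →L[ℂ] X} {M K : ℝ} {B : X →L[ℂ] X}

lemma SL_integral_eq (hsg : IsC0Semigroup T) (hb : ∀ t : ℝ, 0 ≤ t → ‖T t‖ ≤ M)
    (hBK : ‖B‖ ≤ K) (hK0 : 0 ≤ K) {t : ℝ} (ht : 0 ≤ t) (x : X) :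
    SL T B hsg hb hBK hK0 t x
      = Tm T t x + ∫ s in (0:ℝ)..t, Tm T (t - s) (B (SL T B hsg hb hBK hK0 s x)) := by
  have hM0 : 0 ≤ M := le_trans (norm_nonneg _) (Tm_norm hb 0)
  set f : ℕ → ℝ → X := fun n s => Tm T (t - s) (B (dysonF T B n s x)) with hf
  have hfc : ∀ n, Continuous (f n) := fun n => dysonF_integrand_cont hsg hb n x t
  set c : ℕ → ℝ := fun n => M * K * (M * (M * K * t) ^ n / n.factorial * ‖x‖) with hc
  have hc0 : ∀ n, 0 ≤ c n := fun n => by rw [hc]; positivity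
  have hfb : ∀ n, ∀ s ∈ Ioc (0:ℝ) t, ‖f n s‖ ≤ c n := by
    intro n s hs
    have h3 := dysonF_norm_le hsg hb hBK hK0 n s x
    rw [max_eq_left hs.1.le] at h3
    have h4 : ‖dysonF T B n s x‖ ≤ M * (M * K * t) ^ n / n.factorial * ‖x‖ := by
      refine h3.trans ?_
      gcongr
      exact mul_nonneg (mul_nonneg hM0 hK0) hs.1.le
      exact hs.2
    calc ‖f n s‖ ≤ M * ‖B (dysonF T B n s x)‖ :=
          ((Tm T (t-s)).le_opNorm _).trans
            (mul_le_mul_of_nonneg_right (Tm_norm hb _) (norm_nonneg _))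
      _ ≤ M * (K * ‖dysonF T B n s x‖) :=
          mul_le_mul_of_nonneg_left
            ((B.le_opNorm _).trans (mul_le_mul_of_nonneg_right hBK (norm_nonneg _))) hM0
      _ ≤ M * (K * (M * (M * K * t) ^ n / n.factorial * ‖x‖)) := by gcongr
      _ = c n := by rw [hc]; ring
  have hcsum : Summable fun n => c n * t := by
    have h := (dysonF_summable_norm hsg hb hBK hK0 t x).mul_left (M * K * t)
    refine h.congr fun n => ?_
    rw [max_eq_left ht, hc]
    ring
  -- interchange sum and integral
  have hmeas : ∀ n, AEStronglyMeasurable (f n) (volume.restrict (Ioc 0 t)) :=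
    fun n => (hfc n).aestronglyMeasurable.restrict
  have hfin : ∑' n, ∫⁻ s, ‖f n s‖₊ ∂(volume.restrict (Ioc 0 t)) ≠ ⊤ := by
    have hle : ∀ n, ∫⁻ s, ‖f n s‖₊ ∂(volume.restrict (Ioc 0 t))
        ≤ ENNReal.ofReal (c n * t) := by
      intro n
      have h1 : ∫⁻ s, ‖f n s‖₊ ∂(volume.restrict (Ioc 0 t))
          ≤ ∫⁻ _ , ENNReal.ofReal (c n) ∂(volume.restrict (Ioc 0 t)) := by
        refine lintegral_mono_ae ?_
        rw [ae_restrict_iff' measurableSet_Ioc]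
        filter_upwards with s hs
        rw [← ENNReal.ofReal_coe_nnreal, coe_nnnorm]
        exact ENNReal.ofReal_le_ofReal (hfb n s hs)
      refine h1.trans ?_
      rw [lintegral_const, Measure.restrict_apply_univ, Real.volume_Ioc, sub_zero,
        ← ENNReal.ofReal_mul (hc0 n)]
    refine ne_top_of_le_ne_top ?_ (ENNReal.tsum_le_tsum hle)
    rw [← ENNReal.ofReal_tsum_of_nonneg (fun n => mul_nonneg (hc0 n) ht) hcsum]
    exact ENNReal.ofReal_ne_top
  have hinter := (MeasureTheory.integral_tsum hmeas hfin).symm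
  -- hinter : ∑' n, ∫ s in Ioc 0 t, f n s = ∫ s in Ioc 0 t, ∑' n, f n s
  have h1 := Summable.tsum_eq_zero_add (dysonF_summable hsg hb hBK hK0 t x)
  rw [SL_apply, h1]
  have h2 : ∀ n : ℕ, dysonF T B (n+1) t x = ∫ s in Ioc (0:ℝ) t, f n s := by
    intro n
    show (∫ s in (0:ℝ)..(max t 0), Tm T (t - s) (B (dysonF T B n s x)))
      = ∫ s in Ioc (0:ℝ) t, f n s
    rw [max_eq_left ht, intervalIntegral.integral_of_le ht]
  have h3 : ∑' n, dysonF T B (n+1) t x = ∫ s in Ioc (0:ℝ) t, ∑' n, f n s := by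
    rw [tsum_congr h2]
    exact hinter
  have h4 : ∀ s : ℝ, (∑' n, f n s) = Tm T (t - s) (B (SL T B hsg hb hBK hK0 s x)) := by
    intro s
    have := ((Tm T (t - s)).comp B).map_tsum (dysonF_summable hsg hb hBK hK0 s x)
    rw [SL_apply]
    simp only [ContinuousLinearMap.coe_comp', Function.comp_apply] at this
    rw [← this]
  have h5 : (∫ s in Ioc (0:ℝ) t, ∑' n, f n s)
      = ∫ s in (0:ℝ)..t, Tm T (t - s) (B (SL T B hsg hb hBK hK0 s x)) := by
    rw [intervalIntegral.integral_of_le ht]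
    exact setIntegral_congr_fun measurableSet_Ioc fun s _ => h4 s
  rw [h3, h5]
  rfl

end Pert

namespace Pert

variable {T : ℝ → X →L[ℂ] X} {M K : ℝ} {B : X →L[ℂ] X}

/-- A Gronwall-type lemma: a continuous function dominated by `L` times the integral of
its own norm vanishes. -/
lemma gronwall_zero {u : ℝ → X} {b L : ℝ} (hL : 0 ≤ L)
    (hc : ContinuousOn u (Icc 0 b))
    (h : ∀ t ∈ Icc (0:ℝ) b, ‖u t‖ ≤ L * ∫ s in (0:ℝ)..t, ‖u s‖) :
    ∀ t ∈ Icc (0:ℝ) b, u t = 0 := by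
  intro t₀ ht₀
  obtain ⟨D₀, hD₀⟩ := (isCompact_Icc (a := (0:ℝ)) (b := b)).exists_bound_of_continuousOn hc
  set D := max D₀ 0 with hDdef
  have hD : ∀ s ∈ Icc (0:ℝ) b, ‖u s‖ ≤ D := fun s hs => (hD₀ s hs).trans (le_max_left _ _)
  have hD0 : 0 ≤ D := le_max_right _ _
  have key : ∀ n : ℕ, ∀ t ∈ Icc (0:ℝ) b, ‖u t‖ ≤ D * (L * t) ^ n / n.factorial := by
    intro n
    induction n with
    | zero => intro t ht; simpa using hD t ht
    | succ n ih =>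
      intro t ht
      have hiu : IntervalIntegrable (fun s => ‖u s‖) volume 0 t := by
        apply ContinuousOn.intervalIntegrable
        refine (hc.norm).mono ?_
        rw [uIcc_of_le ht.1]
        exact Icc_subset_Icc le_rfl ht.2
      have hig : IntervalIntegrable (fun s => D * (L * s) ^ n / n.factorial) volume 0 t := by
        apply Continuous.intervalIntegrable; fun_prop
      have hmono : (∫ s in (0:ℝ)..t, ‖u s‖)
          ≤ ∫ s in (0:ℝ)..t, D * (L * s) ^ n / n.factorial := by
        refine intervalIntegral.integral_mono_on ht.1 hiu hig ?_
        intro s hs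
        exact ih s ⟨hs.1, hs.2.trans ht.2⟩
      have hval : (∫ s in (0:ℝ)..t, D * (L * s) ^ n / n.factorial)
          = D * L ^ n / n.factorial * (t ^ (n+1) / (n+1)) := by
        have h4 : (fun s : ℝ => D * (L * s) ^ n / n.factorial)
            = fun s : ℝ => (D * L ^ n / n.factorial) * s ^ n := by
          funext s; ring
        rw [h4, intervalIntegral.integral_const_mul, integral_pow]
        ring
      calc ‖u t‖ ≤ L * ∫ s in (0:ℝ)..t, ‖u s‖ := h t ht
        _ ≤ L * (D * L ^ n / n.factorial * (t ^ (n+1) / (n+1))) := by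
            rw [← hval]
            exact mul_le_mul_of_nonneg_left hmono hL
        _ = D * (L * t) ^ (n+1) / (n+1).factorial := by
            rw [Nat.factorial_succ]
            push_cast
            field_simp
            ring
  have hlim : Tendsto (fun n : ℕ => D * (L * t₀) ^ n / n.factorial) atTop (𝓝 0) := by
    have h := FloorSemiring.tendsto_pow_div_factorial_atTop (L * t₀)
    have := h.const_mul D
    simpa [mul_div_assoc] using this
  have : ‖u t₀‖ ≤ 0 := ge_of_tendsto hlim (Eventually.of_forall fun n => key n t₀ ht₀)
  exact norm_le_zero_iff.1 this

/-- Uniqueness for the perturbed integral equation. -/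
lemma integral_eq_unique (hsg : IsC0Semigroup T) (hb : ∀ t : ℝ, 0 ≤ t → ‖T t‖ ≤ M)
    {V W : ℝ → X} {y : X} {b : ℝ}
    (hVc : ContinuousOn V (Icc 0 b)) (hWc : ContinuousOn W (Icc 0 b))
    (hV : ∀ t ∈ Icc (0:ℝ) b, V t = Tm T t y + ∫ s in (0:ℝ)..t, Tm T (t - s) (B (V s)))
    (hW : ∀ t ∈ Icc (0:ℝ) b, W t = Tm T t y + ∫ s in (0:ℝ)..t, Tm T (t - s) (B (W s))) :
    ∀ t ∈ Icc (0:ℝ) b, V t = W t := by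
  have hM0 : 0 ≤ M := le_trans (norm_nonneg _) (Tm_norm hb 0)
  set u : ℝ → X := fun t => V t - W t with hu
  have hcu : ContinuousOn u (Icc 0 b) := hVc.sub hWc
  have hcont : ∀ g : ℝ → X, ContinuousOn g (Icc 0 b) → ∀ t ∈ Icc (0:ℝ) b,
      ContinuousOn (fun s => Tm T (t - s) (B (g s))) (Icc 0 b) := by
    intro g hg t _
    exact (Tm_jointCont hsg hb).comp_continuousOn
      ((continuousOn_const.sub continuousOn_id).prodMk (B.continuous.comp_continuousOn hg))
  have key : ∀ t ∈ Icc (0:ℝ) b, ‖u t‖ ≤ (M * ‖B‖) * ∫ s in (0:ℝ)..t, ‖u s‖ := by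
    intro t ht
    have hVi : IntervalIntegrable (fun s => Tm T (t - s) (B (V s))) volume 0 t := by
      apply ContinuousOn.intervalIntegrable
      refine (hcont V hVc t ht).mono ?_
      rw [uIcc_of_le ht.1]; exact Icc_subset_Icc le_rfl ht.2
    have hWi : IntervalIntegrable (fun s => Tm T (t - s) (B (W s))) volume 0 t := by
      apply ContinuousOn.intervalIntegrable
      refine (hcont W hWc t ht).mono ?_
      rw [uIcc_of_le ht.1]; exact Icc_subset_Icc le_rfl ht.2
    have hut : u t = ∫ s in (0:ℝ)..t, (Tm T (t - s) (B (V s)) - Tm T (t - s) (B (W s))) := by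
      rw [hu]
      simp only
      rw [hV t ht, hW t ht, intervalIntegral.integral_sub hVi hWi]
      abel
    have hnorm : ‖u t‖ ≤ ∫ s in (0:ℝ)..t, (M * ‖B‖) * ‖u s‖ := by
      rw [hut]
      have hbnd : ∀ᵐ s ∂(volume.restrict (Set.uIoc (0:ℝ) t)),
          ‖Tm T (t - s) (B (V s)) - Tm T (t - s) (B (W s))‖ ≤ (M * ‖B‖) * ‖u s‖ := by
        filter_upwards with s
        rw [← map_sub, ← map_sub]
        calc ‖Tm T (t - s) (B (V s - W s))‖ ≤ M * ‖B (V s - W s)‖ :=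
              ((Tm T (t-s)).le_opNorm _).trans
                (mul_le_mul_of_nonneg_right (Tm_norm hb _) (norm_nonneg _))
          _ ≤ M * (‖B‖ * ‖V s - W s‖) :=
              mul_le_mul_of_nonneg_left (B.le_opNorm _) hM0
          _ = (M * ‖B‖) * ‖u s‖ := by rw [hu]; ring
      have hgi : IntervalIntegrable (fun s => (M * ‖B‖) * ‖u s‖) volume 0 t := by
        apply ContinuousOn.intervalIntegrable
        refine (continuousOn_const.mul hcu.norm).mono ?_
        rw [uIcc_of_le ht.1]; exact Icc_subset_Icc le_rfl ht.2
      refine (intervalIntegral.norm_integral_le_abs_of_norm_le hbnd hgi).trans ?_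
      rw [abs_of_nonneg]
      refine intervalIntegral.integral_nonneg ht.1 fun s _ => by positivity
    rw [intervalIntegral.integral_const_mul] at hnorm
    exact hnorm
  intro t ht
  have := gronwall_zero (mul_nonneg hM0 (norm_nonneg B)) hcu key t ht
  rw [hu] at this
  exact sub_eq_zero.1 this

/-- The semigroup property for the Dyson series. -/
lemma SL_add (hsg : IsC0Semigroup T) (hb : ∀ t : ℝ, 0 ≤ t → ‖T t‖ ≤ M)
    (hBK : ‖B‖ ≤ K) (hK0 : 0 ≤ K) {r t : ℝ} (hr : 0 ≤ r) (ht : 0 ≤ t) :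
    SL T B hsg hb hBK hK0 (r + t)
      = (SL T B hsg hb hBK hK0 r) ∘L (SL T B hsg hb hBK hK0 t) := by
  have hM0 : 0 ≤ M := le_trans (norm_nonneg _) (Tm_norm hb 0)
  ext x
  set S := SL T B hsg hb hBK hK0 with hS
  show S (r + t) x = S r (S t x)
  set V : ℝ → X := fun τ => S (τ + t) x with hV
  set W : ℝ → X := fun τ => S τ (S t x) with hW
  have hVc : ContinuousOn V (Icc 0 r) :=
    ((SL_cont hsg hb hBK hK0 hM0 x).comp (continuous_id.add continuous_const)).continuousOn
  have hWc : ContinuousOn W (Icc 0 r) :=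
    (SL_cont hsg hb hBK hK0 hM0 (S t x)).continuousOn
  have hWeq : ∀ τ ∈ Icc (0:ℝ) r, W τ = Tm T τ (S t x)
      + ∫ s in (0:ℝ)..τ, Tm T (τ - s) (B (W s)) :=
    fun τ hτ => SL_integral_eq hsg hb hBK hK0 hτ.1 (S t x)
  have hVeq : ∀ τ ∈ Icc (0:ℝ) r, V τ = Tm T τ (S t x)
      + ∫ s in (0:ℝ)..τ, Tm T (τ - s) (B (V s)) := by
    intro τ hτ
    have h0 : V τ = Tm T (τ + t) x
        + ∫ s in (0:ℝ)..(τ + t), Tm T (τ + t - s) (B (S s x)) :=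
      SL_integral_eq hsg hb hBK hK0 (by linarith [hτ.1]) x
    have hcg : Continuous fun s => Tm T (τ + t - s) (B (S s x)) :=
      (Tm_jointCont hsg hb).comp ((continuous_const.sub continuous_id).prodMk
        (B.continuous.comp (SL_cont hsg hb hBK hK0 hM0 x)))
    have hsplit : (∫ s in (0:ℝ)..(τ + t), Tm T (τ + t - s) (B (S s x)))
        = (∫ s in (0:ℝ)..t, Tm T (τ + t - s) (B (S s x)))
          + ∫ s in t..(τ + t), Tm T (τ + t - s) (B (S s x)) :=
      (intervalIntegral.integral_add_adjacent_intervals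
        (hcg.intervalIntegrable _ _) (hcg.intervalIntegrable _ _)).symm
    -- first part plus Tm (τ+t) x equals Tm τ (S t x)
    have hfirst : Tm T (τ + t) x + (∫ s in (0:ℝ)..t, Tm T (τ + t - s) (B (S s x)))
        = Tm T τ (S t x) := by
      have h1 : ∀ s ∈ uIcc (0:ℝ) t,
          Tm T (τ + t - s) (B (S s x)) = Tm T τ (Tm T (t - s) (B (S s x))) := by
        intro s hs
        rw [uIcc_of_le ht] at hs
        have : Tm T (τ + t - s) = (Tm T τ) ∘L (Tm T (t - s)) := by
          have := Tm_add hsg hτ.1 (by linarith [hs.2] : (0:ℝ) ≤ t - s)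
          rw [show τ + (t - s) = τ + t - s by ring] at this
          exact this
        rw [this]; rfl
      rw [intervalIntegral.integral_congr h1]
      have h2 : (∫ s in (0:ℝ)..t, Tm T τ (Tm T (t - s) (B (S s x))))
          = Tm T τ (∫ s in (0:ℝ)..t, Tm T (t - s) (B (S s x))) := by
        rw [← (Tm T τ).intervalIntegral_comp_comm]
        apply Continuous.intervalIntegrable
        exact (Tm_jointCont hsg hb).comp ((continuous_const.sub continuous_id).prodMk
          (B.continuous.comp (SL_cont hsg hb hBK hK0 hM0 x)))
      rw [h2]
      have h3 : Tm T (τ + t) = (Tm T τ) ∘L (Tm T t) := Tm_add hsg hτ.1 ht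
      rw [h3]
      simp only [ContinuousLinearMap.comp_apply]
      rw [← map_add]
      congr 1
      exact (SL_integral_eq hsg hb hBK hK0 ht x).symm
    -- second part is the integral against V
    have hsecond : (∫ s in t..(τ + t), Tm T (τ + t - s) (B (S s x)))
        = ∫ s in (0:ℝ)..τ, Tm T (τ - s) (B (V s)) := by
      have := intervalIntegral.integral_comp_add_right (a := (0:ℝ)) (b := τ)
        (fun s => Tm T (τ + t - s) (B (S s x))) t
      rw [zero_add] at this
      rw [← this]
      apply intervalIntegral.integral_congr
      intro s _
      rw [hV]
      simp only
      congr 1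
      ring
    rw [h0, hsplit, ← add_assoc, hfirst, hsecond]
  have := integral_eq_unique hsg hb hVc hWc hVeq hWeq r ⟨hr, le_rfl⟩
  rw [hV, hW] at this
  simpa using this

end Pert

namespace Pert

variable {T : ℝ → X →L[ℂ] X} {M K : ℝ} {B : X →L[ℂ] X}

lemma SL_deriv_int (hsg : IsC0Semigroup T) (hb : ∀ t : ℝ, 0 ≤ t → ‖T t‖ ≤ M)
    (hBK : ‖B‖ ≤ K) (hK0 : 0 ≤ K) (hM0 : 0 ≤ M) (x : X) :
    Tendsto (fun t : ℝ => t⁻¹ • ∫ s in (0:ℝ)..t,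
        Tm T (t - s) (B (SL T B hsg hb hBK hK0 s x))) (𝓝[>] 0) (𝓝 (B x)) := by
  have hG : Continuous (fun p : ℝ × ℝ =>
      Tm T (p.1 - p.2) (B (SL T B hsg hb hBK hK0 p.2 x))) :=
    (Tm_jointCont hsg hb).comp ((continuous_fst.sub continuous_snd).prodMk
      (B.continuous.comp ((SL_cont hsg hb hBK hK0 hM0 x).comp continuous_snd)))
  have h := avg_tendsto hG
  have h0 : Tm T ((0:ℝ) - 0) (B (SL T B hsg hb hBK hK0 0 x)) = B x := by
    rw [SL_zero, sub_zero, Tm_zero hsg]; rfl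
  rw [h0] at h
  exact h

end Pert

open Pert in
/-- If `A` generates a bounded C₀-semigroup, `‖T_A(t)‖ ≤ M`, and `C` satisfies
`D(A) ⊆ D(C)` with `‖C R(μ,A)‖ ≤ K/μ` for `μ > 0`, then `A + C` generates a
C₀-semigroup with `‖T_{A+C}(t)‖ ≤ M e^{MKt}`. -/
theorem perturbation_bounded_semigroup_case
    {X : Type*} [NormedAddCommGroup X] [NormedSpace ℂ X] [CompleteSpace X]
    (A C : X →ₗ.[ℂ] X) (T : ℝ → X →L[ℂ] X) (M K : ℝ)
    (hM : 1 ≤ M)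
    (hgen : IsGenerator T A)
    (hbound : ∀ t : ℝ, 0 ≤ t → ‖T t‖ ≤ M)
    (hdom : A.domain ≤ C.domain)
    (hK : 0 < K)
    (hCR : ∀ μ : ℝ, 0 < μ → ∀ R : X →L[ℂ] X, IsResolventAt A (μ : ℂ) R →
      ∀ x : X, ∀ hx : R x ∈ C.domain, ‖C ⟨R x, hx⟩‖ ≤ K / μ * ‖x‖) :
    ∃ S : ℝ → X →L[ℂ] X, IsGenerator S (A + C) ∧
      ∀ t : ℝ, 0 ≤ t → ‖S t‖ ≤ M * Real.exp (M * K * t) := by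
  have hsg := hgen.1
  have hM0 : (0:ℝ) ≤ M := by linarith
  have hK0 : (0:ℝ) ≤ K := hK.le
  have hCb := C_bound hgen hbound hdom hK hCR
  obtain ⟨B, hBK, hBeq⟩ := exists_B hgen hdom hK hCb
  set S : ℝ → X →L[ℂ] X := SL T B hsg hbound hBK hK0 with hSdef
  refine ⟨S, ⟨⟨?_, ?_, ?_⟩, ?_, ?_⟩, ?_⟩
  · -- S 0 = 1
    exact SL_zero hsg hbound hBK hK0
  · -- semigroup law
    intro s t hs ht
    exact SL_add hsg hbound hBK hK0 hs ht
  · -- strong continuity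
    intro x
    exact (SL_cont hsg hbound hBK hK0 hM0 x).continuousOn
  · -- generator limit on the domain
    intro x
    have hxA : (x : X) ∈ A.domain := x.2.1
    rw [tendsto_complex_iff_real (f := fun t => S t ↑x - (x : X))]
    have h1 : Tendsto (fun t : ℝ => t⁻¹ • (Tm T t ↑x - (x : X))) (𝓝[>] 0)
        (𝓝 (A ⟨(x : X), hxA⟩)) := gen_tendsto hgen ⟨(x : X), hxA⟩
    have h2 := SL_deriv_int hsg hbound hBK hK0 hM0 (x : X)
    have hlim := h1.add h2
    have heq : (fun t : ℝ => t⁻¹ • (Tm T t ↑x - (x : X))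
        + t⁻¹ • ∫ s in (0:ℝ)..t, Tm T (t - s) (B (S s ↑x)))
        =ᶠ[𝓝[>] 0] fun t : ℝ => t⁻¹ • (S t ↑x - (x : X)) := by
      filter_upwards [self_mem_nhdsWithin] with t (ht : 0 < t)
      rw [SL_integral_eq hsg hbound hBK hK0 ht.le (x : X)]
      module
    have hlim2 := hlim.congr' heq
    have hval : A ⟨(x : X), hxA⟩ + B ↑x = (A + C) x := by
      rw [LinearPMap.add_apply]
      congr 1
      have := hBeq ⟨(x : X), hxA⟩
      rw [this]
    rw [hval] at hlim2
    -- identify T of the statement with Tm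
    refine hlim2.congr' ?_
    filter_upwards [self_mem_nhdsWithin] with t (ht : 0 < t)
    rfl
  · -- maximality of the generator
    rintro x ⟨y, hy⟩
    rw [tendsto_complex_iff_real (f := fun t => S t x - x)] at hy
    have h2 := SL_deriv_int hsg hbound hBK hK0 hM0 x
    have h3 : Tendsto (fun t : ℝ => t⁻¹ • (Tm T t x - x)) (𝓝[>] 0) (𝓝 (y - B x)) := by
      refine (hy.sub h2).congr' ?_
      filter_upwards [self_mem_nhdsWithin] with t (ht : 0 < t)
      rw [SL_integral_eq hsg hbound hBK hK0 ht.le x]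
      module
    have hxA := mem_domain_of_tendsto hgen h3
    exact ⟨hxA, hdom hxA⟩
  · -- the norm bound
    intro t ht
    have h := SL_norm hsg hbound hBK hK0 hM0 t
    rwa [max_eq_left ht] at h
end

section
/- Let A generate a C₀-semigroup with ‖T_A(t)‖ ≤ M e^{ωt}, and let C₁ ∈ GL_A(X) be such that the semigroup generated by A + C₁ is exponentially stable. Then there exists ε > 0 such that for every C₂ ∈ GL_A(X) with ‖C₁ − C₂‖_A < ε, the semigroup generated by A + C₂ is also exponentially stable. -/
open Filter Topology

variable {X : Type*} [NormedAddCommGroup X] [NormedSpace ℂ X] [CompleteSpace X]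

/-- Exponential stability of a semigroup. -/
def ExpStable (T : ℝ → X →L[ℂ] X) : Prop :=
  ∃ N α : ℝ, 0 < N ∧ 0 < α ∧ ∀ t : ℝ, 0 ≤ t → ‖T t‖ ≤ N * Real.exp (-α * t)

/-- Exponential dichotomy (hyperbolicity) of a semigroup: there is a bounded projection
`P` commuting with the semigroup, such that the semigroup decays exponentially on the
range of `P`, and is invertible on the kernel of `P` with exponentially decaying
inverses. -/
def HasExpDichotomy (T : ℝ → X →L[ℂ] X) : Prop :=
  ∃ (P : X →L[ℂ] X) (N α : ℝ), P ∘L P = P ∧ 0 < N ∧ 0 < α ∧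
    (∀ t : ℝ, 0 ≤ t → T t ∘L P = P ∘L T t) ∧
    (∀ t : ℝ, 0 ≤ t → ∀ x : X, P x = x → ‖T t x‖ ≤ N * Real.exp (-α * t) * ‖x‖) ∧
    (∀ t : ℝ, 0 ≤ t → ∃ S : X →L[ℂ] X,
      (∀ x : X, P x = 0 → P (S x) = 0 ∧ S (T t x) = x ∧ T t (S x) = x) ∧
      (∀ x : X, P x = 0 → ‖S x‖ ≤ N * Real.exp (-α * t) * ‖x‖))

section AuxLemmas
open Set MeasureTheory

/-- local uniform bound via Banach-Steinhaus -/
lemma c0_bound_Icc {T : ℝ → X →L[ℂ] X} (hT : IsC0Semigroup T) (b : ℝ) :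
    ∃ C : ℝ, 0 ≤ C ∧ ∀ s ∈ Set.Icc (0:ℝ) b, ‖T s‖ ≤ C := by
  rcases le_or_gt b 0 with hb | hb
  · refine ⟨‖T 0‖, norm_nonneg _, fun s hs => ?_⟩
    have : s = 0 := le_antisymm (hs.2.trans hb) hs.1
    simp [this]
  · have hpt : ∀ x : X, ∃ C : ℝ, ∀ s : Set.Icc (0:ℝ) b, ‖T s x‖ ≤ C := by
      intro x
      have hc : ContinuousOn (fun t => T t x) (Set.Icc 0 b) :=
        (hT.2.2 x).mono (Set.Icc_subset_Ici_self)
      obtain ⟨C, hC⟩ := (isCompact_Icc (a := (0:ℝ)) (b := b)).exists_bound_of_continuousOn hc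
      exact ⟨C, fun s => hC s s.2⟩
    obtain ⟨C', hC'⟩ := banach_steinhaus (g := fun s : Set.Icc (0:ℝ) b => T s) hpt
    exact ⟨max C' 0, le_max_right _ _, fun s hs => le_max_of_le_left (hC' ⟨s, hs⟩)⟩

/-- joint strong continuity -/
lemma c0_tendsto_apply {T : ℝ → X →L[ℂ] X} (hT : IsC0Semigroup T) {ι : Type*}
    {l : Filter ι} {u : ι → ℝ} {v : ι → X} {s : ℝ} (hs : 0 ≤ s)
    (hu : Tendsto u l (𝓝 s)) (hu0 : ∀ᶠ i in l, 0 ≤ u i) {z : X}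
    (hv : Tendsto v l (𝓝 z)) :
    Tendsto (fun i => T (u i) (v i)) l (𝓝 (T s z)) := by
  obtain ⟨C, hC0, hC⟩ := c0_bound_Icc hT (s + 1)
  have hmem : ∀ᶠ i in l, u i ∈ Set.Icc (0:ℝ) (s+1) := by
    have h1 : ∀ᶠ i in l, u i ≤ s + 1 :=
      hu.eventually (eventually_le_nhds (by linarith))
    filter_upwards [hu0, h1] with i h h' using ⟨h, h'⟩
  have huIci : Tendsto u l (𝓝[Set.Ici 0] s) := by
    rw [tendsto_nhdsWithin_iff]; exact ⟨hu, hu0⟩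
  have h2 : Tendsto (fun i => T (u i) z) l (𝓝 (T s z)) :=
    ((hT.2.2 z s hs).tendsto).comp huIci
  rw [← tendsto_sub_nhds_zero_iff]
  have key : Tendsto (fun i => T (u i) (v i) - T (u i) z) l (𝓝 0) := by
    refine squeeze_zero_norm' (a := fun i => C * ‖v i - z‖) ?_ ?_
    · filter_upwards [hmem] with i hi
      have : T (u i) (v i) - T (u i) z = T (u i) (v i - z) := by
        rw [map_sub]
      rw [this]
      exact (T (u i)).le_of_opNorm_le (hC _ hi) _
    · have : Tendsto (fun i => ‖v i - z‖) l (𝓝 0) := by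
        rw [← tendsto_sub_nhds_zero_iff] at hv
        simpa using hv.norm
      simpa using this.const_mul C
  have := key.add (h2.sub_const (T s z))
  simpa using this

lemma gen_quot_real {T : ℝ → X →L[ℂ] X} {G : X →ₗ.[ℂ] X} (hT : IsGenerator T G)
    (x : G.domain) :
    Tendsto (fun h : ℝ => h⁻¹ • (T h ↑x - ↑x)) (𝓝[>] 0) (𝓝 (G x)) := by
  refine (hT.2.1 x).congr fun h => ?_
  rw [← Complex.ofReal_inv, Complex.coe_smul]

lemma gen_slope {T : ℝ → X →L[ℂ] X} {G : X →ₗ.[ℂ] X} (hT : IsGenerator T G)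
    (x : G.domain) {s : ℝ} (hs : 0 ≤ s) :
    Tendsto (fun u : ℝ => (u - s)⁻¹ • (T u ↑x - T s ↑x)) (𝓝[Set.Ici 0 \ {s}] s)
      (𝓝 (T s (G x))) := by
  have hq := gen_quot_real hT x
  have habs : Tendsto (fun u : ℝ => |u - s|) (𝓝[Set.Ici 0 \ {s}] s) (𝓝[>] 0) := by
    rw [tendsto_nhdsWithin_iff]
    constructor
    · have : Tendsto (fun u : ℝ => |u - s|) (𝓝 s) (𝓝 |s - s|) :=
        (continuous_abs.comp (continuous_id.sub continuous_const)).tendsto s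
      simpa using this.mono_left nhdsWithin_le_nhds
    · filter_upwards [self_mem_nhdsWithin] with u hu
      obtain ⟨-, hu2⟩ := hu
      exact abs_pos.2 (sub_ne_zero.2 hu2)
  have hmin : Tendsto (fun u : ℝ => min u s) (𝓝[Set.Ici 0 \ {s}] s) (𝓝 s) := by
    have : Tendsto (fun u : ℝ => min u s) (𝓝 s) (𝓝 (min s s)) :=
      (continuous_id.min continuous_const).tendsto s
    simpa using this.mono_left nhdsWithin_le_nhds
  have hmin0 : ∀ᶠ u in 𝓝[Set.Ici 0 \ {s}] s, 0 ≤ min u s := by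
    filter_upwards [self_mem_nhdsWithin] with u hu
    obtain ⟨hu1, -⟩ := hu
    exact le_min hu1 hs
  have key := c0_tendsto_apply hT.1 hs hmin hmin0 (hq.comp habs)
  refine key.congr' ?_
  filter_upwards [self_mem_nhdsWithin] with u hu
  obtain ⟨hu1, hus⟩ := hu
  have hu0 : (0:ℝ) ≤ u := hu1
  have hus' : u ≠ s := hus
  show T (min u s) (|u - s|⁻¹ • (T |u - s| ↑x - ↑x)) = (u - s)⁻¹ • (T u ↑x - T s ↑x)
  rcases lt_or_gt_of_ne hus' with h | h
  · -- u < s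
    have e1 : min u s = u := min_eq_left h.le
    have e2 : |u - s| = s - u := by rw [abs_sub_comm, abs_of_pos (by linarith)]
    rw [e1, e2]
    rw [(T u).map_smul_of_tower, map_sub]
    have e3 : T u (T (s - u) ↑x) = T s ↑x := by
      rw [show T u (T (s-u) ↑x) = (T u ∘L T (s-u)) ↑x from rfl, ← hT.1.2.1 u (s-u) hu0 (by linarith)]
      norm_num
    rw [e3]
    rw [show (u - s)⁻¹ = -(s - u)⁻¹ by rw [show u - s = -(s - u) by ring, inv_neg], neg_smul, ← smul_neg, neg_sub]
  · -- s < u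
    have e1 : min u s = s := min_eq_right h.le
    have e2 : |u - s| = u - s := abs_of_pos (by linarith)
    rw [e1, e2]
    rw [(T s).map_smul_of_tower, map_sub]
    have e3 : T s (T (u - s) ↑x) = T u ↑x := by
      rw [show T s (T (u-s) ↑x) = (T s ∘L T (u-s)) ↑x from rfl, ← hT.1.2.1 s (u-s) hs (by linarith)]
      norm_num
    rw [e3]

omit [CompleteSpace X] in
lemma gen_invariant {T : ℝ → X →L[ℂ] X} {G : X →ₗ.[ℂ] X} (hT : IsGenerator T G)
    (x : G.domain) {s : ℝ} (hs : 0 ≤ s) :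
    ∃ h : T s ↑x ∈ G.domain, G ⟨T s ↑x, h⟩ = T s (G x) := by
  have hq : Tendsto (fun h : ℝ => (h:ℂ)⁻¹ • (T h (T s ↑x) - T s ↑x)) (𝓝[>] 0)
      (𝓝 (T s (G x))) := by
    have : Tendsto (fun h : ℝ => T s ((h:ℂ)⁻¹ • (T h ↑x - ↑x))) (𝓝[>] 0) (𝓝 (T s (G x))) :=
      ((T s).continuous.tendsto _).comp (hT.2.1 x)
    refine this.congr' ?_
    filter_upwards [self_mem_nhdsWithin] with h hh
    rw [_root_.map_smul, _root_.map_sub]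
    have : T s (T h ↑x) = T h (T s ↑x) := by
      rw [show T s (T h ↑x) = (T s ∘L T h) ↑x from rfl, ← hT.1.2.1 s h hs (le_of_lt hh),
        show T (s + h) ↑x = (T h ∘L T s) ↑x by rw [← hT.1.2.1 h s (le_of_lt hh) hs, add_comm]]
      rfl
    rw [this]
  have mem := hT.2.2 _ ⟨_, hq⟩
  exact ⟨mem, tendsto_nhds_unique (hT.2.1 ⟨T s ↑x, mem⟩) hq⟩

lemma gen_hasDerivWithinAt {T : ℝ → X →L[ℂ] X} {G : X →ₗ.[ℂ] X} (hT : IsGenerator T G)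
    (x : G.domain) {s t : ℝ} (hs : s ∈ Set.Icc 0 t) :
    HasDerivWithinAt (fun u => T u ↑x) (T s (G x)) (Set.Icc 0 t) s := by
  rw [hasDerivWithinAt_iff_tendsto_slope]
  have h := (gen_slope hT x hs.1).mono_left
    (nhdsWithin_mono _ (fun u hu => ⟨hu.1.1, hu.2⟩ : Set.Icc 0 t \ {s} ⊆ Set.Ici 0 \ {s}))
  refine h.congr fun u => ?_
  simp [slope]

open MeasureTheory in
lemma avg_tendsto {g : ℝ → X} {a : ℝ}
    (hg : ∀ b : ℝ, a ≤ b → IntervalIntegrable g volume a b)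
    (hc : ContinuousWithinAt g (Set.Ici a) a) :
    Tendsto (fun h : ℝ => h⁻¹ • ∫ s in a..(a+h), g s) (𝓝[>] 0) (𝓝 (g a)) := by
  rw [Metric.tendsto_nhdsWithin_nhds]
  intro ε hε
  obtain ⟨δ, hδ, hδ'⟩ := Metric.continuousWithinAt_iff.mp hc (ε/2) (by positivity)
  refine ⟨δ, hδ, ?_⟩
  intro h hh hdist
  have h0 : (0:ℝ) < h := hh
  have hhd : h < δ := by
    have := hdist
    rw [Real.dist_eq, sub_zero, abs_of_pos h0] at this
    exact this
  have hint : IntervalIntegrable g volume a (a+h) := hg (a+h) (by linarith)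
  have hbound : ∀ s ∈ Set.uIoc a (a+h), ‖g s - g a‖ ≤ ε/2 := by
    intro s hs
    rw [Set.uIoc_of_le (by linarith)] at hs
    have hd : dist (g s) (g a) < ε/2 := by
      refine hδ' (Set.mem_Ici.mpr hs.1.le) ?_
      rw [Real.dist_eq, abs_of_pos (by linarith [hs.1])]
      linarith [hs.2]
    rw [dist_eq_norm] at hd
    exact hd.le
  have keyint : (∫ s in a..(a+h), g s) - h • g a = ∫ s in a..(a+h), (g s - g a) := by
    rw [intervalIntegral.integral_sub hint intervalIntegrable_const,
      intervalIntegral.integral_const]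
    simp
  have hnorm : ‖(∫ s in a..(a+h), g s) - h • g a‖ ≤ (ε/2) * h := by
    rw [keyint]
    have := intervalIntegral.norm_integral_le_of_norm_le_const hbound
    simpa [abs_of_pos h0] using this
  rw [dist_eq_norm]
  have expand : h⁻¹ • (∫ s in a..(a+h), g s) - g a
      = h⁻¹ • ((∫ s in a..(a+h), g s) - h • g a) := by
    rw [smul_sub, smul_smul, inv_mul_cancel₀ h0.ne', one_smul]
  rw [expand, norm_smul, Real.norm_eq_abs, abs_of_pos (by positivity)]
  calc h⁻¹ * ‖(∫ s in a..(a+h), g s) - h • g a‖ ≤ h⁻¹ * ((ε/2) * h) := by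
        exact mul_le_mul_of_nonneg_left hnorm (by positivity)
    _ = ε/2 := by field_simp
    _ < ε := by linarith

open MeasureTheory in
lemma gen_dense {T : ℝ → X →L[ℂ] X} {G : X →ₗ.[ℂ] X} (hT : IsGenerator T G) :
    Dense (G.domain : Set X) := by
  intro x
  set g : ℝ → X := fun s => T s x with hgdef
  have hgc : ContinuousOn g (Set.Ici 0) := hT.1.2.2 x
  have hint : ∀ b1 b2 : ℝ, 0 ≤ b1 → 0 ≤ b2 → IntervalIntegrable g volume b1 b2 := by
    intro b1 b2 h1 h2
    refine (hgc.mono ?_).intervalIntegrable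
    intro s hs
    rw [Set.mem_uIcc] at hs
    rcases hs with ⟨h, -⟩ | ⟨h, -⟩
    · exact le_trans h1 h
    · exact le_trans h2 h
  have havg0 : Tendsto (fun h : ℝ => h⁻¹ • ∫ s in (0:ℝ)..(0+h), g s) (𝓝[>] 0) (𝓝 (g 0)) :=
    avg_tendsto (fun b hb => hint 0 b le_rfl hb) (hgc 0 Set.self_mem_Ici)
  have hmem : ∀ t : ℝ, 0 < t → (∫ s in (0:ℝ)..t, g s) ∈ G.domain := by
    intro t ht
    apply hT.2.2
    refine ⟨T t x - x, ?_⟩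
    have havgt : Tendsto (fun h : ℝ => h⁻¹ • ∫ s in t..(t+h), g s) (𝓝[>] 0) (𝓝 (g t)) :=
      avg_tendsto (fun b hb => hint t b ht.le (by linarith))
        ((hgc t (Set.mem_Ici.mpr ht.le)).mono (Set.Ici_subset_Ici.mpr ht.le))
    have main : Tendsto
        (fun h : ℝ => h⁻¹ • (T h (∫ s in (0:ℝ)..t, g s) - ∫ s in (0:ℝ)..t, g s))
        (𝓝[>] 0) (𝓝 (T t x - x)) := by
      have lim := havgt.sub havg0
      rw [show g t = T t x from rfl, show g 0 = T 0 x from rfl, hT.1.1] at lim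
      simp only [ContinuousLinearMap.one_apply] at lim
      refine lim.congr' ?_
      filter_upwards [Ioo_mem_nhdsGT ht] with h hh
      obtain ⟨h0, hht⟩ := hh
      -- rewrite T h ∘ integral
      have e1 : T h (∫ s in (0:ℝ)..t, g s) = ∫ s in (0:ℝ)..t, T h (g s) :=
        ((T h).intervalIntegral_comp_comm (hint 0 t le_rfl ht.le)).symm
      have e2 : (∫ s in (0:ℝ)..t, T h (g s)) = ∫ s in (0:ℝ)..t, g (s + h) := by
        refine intervalIntegral.integral_congr ?_
        intro s hs
        rw [Set.uIcc_of_le ht.le] at hs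
        show T h (T s x) = T (s + h) x
        rw [add_comm, hT.1.2.1 h s h0.le hs.1]
        rfl
      have e3 : (∫ s in (0:ℝ)..t, g (s + h)) = ∫ s in (0+h)..(t+h), g s :=
        intervalIntegral.integral_comp_add_right g h
      have i1 : IntervalIntegrable g volume h t := hint h t h0.le ht.le
      have i2 : IntervalIntegrable g volume t (t+h) := hint t (t+h) ht.le (by linarith)
      have i3 : IntervalIntegrable g volume 0 h := hint 0 h le_rfl h0.le
      have e4 : (∫ s in (0+h)..(t+h), g s) - (∫ s in (0:ℝ)..t, g s)
          = (∫ s in t..(t+h), g s) - ∫ s in (0:ℝ)..(0+h), g s := by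
        rw [zero_add]
        rw [← intervalIntegral.integral_add_adjacent_intervals i1 i2,
          ← intervalIntegral.integral_add_adjacent_intervals i3 i1]
        abel
      rw [e1, e2, e3, e4, smul_sub]
    refine main.congr fun h => ?_
    rw [← Complex.ofReal_inv, Complex.coe_smul]
  have hmem' : ∀ᶠ t in 𝓝[>] (0:ℝ), ((t:ℝ)⁻¹ • ∫ s in (0:ℝ)..(0+t), g s) ∈ (G.domain : Set X) := by
    filter_upwards [self_mem_nhdsWithin] with t ht
    have h1 : (∫ s in (0:ℝ)..(0+t), g s) ∈ G.domain := by
      rw [zero_add]; exact hmem t ht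
    have := G.domain.smul_mem ((t⁻¹ : ℝ) : ℂ) h1
    rwa [Complex.coe_smul] at this
  have := mem_closure_of_tendsto havg0 hmem'
  rwa [show g 0 = x by rw [hgdef]; show T 0 x = x; rw [hT.1.1]; rfl] at this

lemma opnorm_le_of_dense {S : X →L[ℂ] X} {D : Set X} (hD : Dense D) {c : ℝ} (hc : 0 ≤ c)
    (h : ∀ x ∈ D, ‖S x‖ ≤ c * ‖x‖) : ‖S‖ ≤ c := by
  refine S.opNorm_le_bound hc fun x => ?_
  have hclosed : IsClosed {x : X | ‖S x‖ ≤ c * ‖x‖} :=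
    isClosed_le (S.continuous.norm) (continuous_const.mul continuous_norm)
  have hsub : closure D ⊆ {x : X | ‖S x‖ ≤ c * ‖x‖} := closure_minimal h hclosed
  exact hsub (by rw [hD.closure_eq]; trivial)

omit [CompleteSpace X] in
lemma c0_pow_bound {T : ℝ → X →L[ℂ] X} (hT : IsC0Semigroup T) {t₀ : ℝ} (ht₀ : 0 ≤ t₀) :
    ∀ n : ℕ, ∀ r : ℝ, 0 ≤ r → ‖T (r + n * t₀)‖ ≤ ‖T r‖ * ‖T t₀‖ ^ n := by
  intro n
  induction n with
  | zero => simp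
  | succ n ih =>
    intro r hr
    have e : (r + (n+1 : ℕ) * t₀ : ℝ) = (r + n * t₀) + t₀ := by push_cast; ring
    rw [e, hT.2.1 _ t₀ (by positivity) ht₀]
    calc ‖T (r + n*t₀) ∘L T t₀‖ ≤ ‖T (r + n*t₀)‖ * ‖T t₀‖ :=
          ContinuousLinearMap.opNorm_comp_le _ _
      _ ≤ (‖T r‖ * ‖T t₀‖ ^ n) * ‖T t₀‖ :=
          mul_le_mul_of_nonneg_right (ih r hr) (norm_nonneg _)
      _ = ‖T r‖ * ‖T t₀‖ ^ (n+1) := by ring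

lemma keyDeriv {T₁ T₂ : ℝ → X →L[ℂ] X} {G₁ G₂ : X →ₗ.[ℂ] X}
    (h₁ : IsGenerator T₁ G₁) (h₂ : IsGenerator T₂ G₂)
    (x : G₂.domain) {t s : ℝ} (hs : s ∈ Set.Icc 0 t)
    (m₂ : T₂ s ↑x ∈ G₂.domain) (m₁ : T₂ s ↑x ∈ G₁.domain) :
    HasDerivWithinAt (fun u => T₁ (t - u) (T₂ u ↑x))
      (T₁ (t - s) (G₂ ⟨T₂ s ↑x, m₂⟩ - G₁ ⟨T₂ s ↑x, m₁⟩)) (Set.Icc 0 t) s := by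
  obtain ⟨hs0, hst⟩ := hs
  have hts0 : (0:ℝ) ≤ t - s := by linarith
  set y := T₂ s ↑x with hy
  -- part B : derivative of u ↦ T₁ (t-u) y
  have hBouter : HasDerivWithinAt (fun τ => T₁ τ y) (T₁ (t-s) (G₁ ⟨y, m₁⟩)) (Set.Icc 0 t) (t-s) :=
    gen_hasDerivWithinAt h₁ ⟨y, m₁⟩ ⟨by linarith, by linarith⟩
  have hinner : HasDerivWithinAt (fun u : ℝ => t - u) (-1) (Set.Icc 0 t) s := by
    exact ((hasDerivAt_id s).const_sub t).hasDerivWithinAt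
  have hmaps : Set.MapsTo (fun u : ℝ => t - u) (Set.Icc 0 t) (Set.Icc 0 t) := by
    intro u hu
    obtain ⟨h1, h2⟩ := hu
    refine ⟨?_, ?_⟩
    · show (0:ℝ) ≤ t - u; linarith
    · show t - u ≤ t; linarith
  have hB : HasDerivWithinAt (fun u : ℝ => T₁ (t-u) y)
      ((-1 : ℝ) • T₁ (t-s) (G₁ ⟨y, m₁⟩)) (Set.Icc 0 t) s :=
    HasDerivWithinAt.scomp s hBouter hinner hmaps
  have hBs := hasDerivWithinAt_iff_tendsto_slope.mp hB
  -- part A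
  have hslope₂ := hasDerivWithinAt_iff_tendsto_slope.mp (gen_hasDerivWithinAt h₂ x ⟨hs0, hst⟩)
  have htu : Tendsto (fun u : ℝ => t - u) (𝓝[Set.Icc 0 t \ {s}] s) (𝓝 (t - s)) :=
    ((continuous_const.sub continuous_id).tendsto s).mono_left nhdsWithin_le_nhds
  have htu0 : ∀ᶠ u in 𝓝[Set.Icc 0 t \ {s}] s, 0 ≤ t - u := by
    filter_upwards [self_mem_nhdsWithin] with u hu
    obtain ⟨⟨-, hu2⟩, -⟩ := hu
    linarith
  have hA : Tendsto (fun u => T₁ (t-u) (slope (fun v => T₂ v ↑x) s u))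
      (𝓝[Set.Icc 0 t \ {s}] s) (𝓝 (T₁ (t-s) (T₂ s (G₂ x)))) :=
    c0_tendsto_apply h₁.1 hts0 htu htu0 hslope₂
  rw [hasDerivWithinAt_iff_tendsto_slope]
  have hsum := hA.add hBs
  obtain ⟨m₂', hval⟩ := gen_invariant h₂ x hs0
  have hvalue : T₁ (t-s) (T₂ s (G₂ x)) + (-1 : ℝ) • T₁ (t-s) (G₁ ⟨y, m₁⟩)
      = T₁ (t - s) (G₂ ⟨T₂ s ↑x, m₂⟩ - G₁ ⟨T₂ s ↑x, m₁⟩) := by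
    rw [map_sub]
    have : G₂ ⟨T₂ s ↑x, m₂⟩ = T₂ s (G₂ x) := hval
    rw [this]
    simp [sub_eq_add_neg]
    rfl
  rw [← hvalue]
  refine hsum.congr fun u => ?_
  show T₁ (t-u) (slope (fun v => T₂ v ↑x) s u) + slope (fun v : ℝ => T₁ (t-v) y) s u
      = slope (fun v => T₁ (t - v) (T₂ v ↑x)) s u
  simp only [slope_def_module]
  rw [(T₁ (t-u)).map_smul_of_tower, map_sub]
  rw [← smul_add]
  congr 1
  abel

omit [CompleteSpace X] in
lemma add_sub_apply (A C C' : X →ₗ.[ℂ] X) {w : X} (m : w ∈ (A + C).domain)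
    (m' : w ∈ (A + C').domain) (hA : w ∈ A.domain) (hc : w ∈ C.domain)
    (hc' : w ∈ C'.domain) :
    ((A + C) ⟨w, m⟩ : X) - (A + C') ⟨w, m'⟩ = (C ⟨w, hc⟩ : X) - C' ⟨w, hc'⟩ := by
  have e1 : ((A + C) ⟨w, m⟩ : X) = A ⟨w, hA⟩ + C ⟨w, hc⟩ :=
    LinearPMap.add_apply A C ⟨w, m⟩
  have e2 : ((A + C') ⟨w, m'⟩ : X) = A ⟨w, hA⟩ + C' ⟨w, hc'⟩ :=
    LinearPMap.add_apply A C' ⟨w, m'⟩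
  rw [e1, e2]
  abel

end AuxLemmas

set_option maxHeartbeats 1000000

/-- Persistence of exponential stability: if `A + C₁` generates an exponentially stable
semigroup, then so does `A + C₂` whenever `‖C₁ - C₂‖_A` is sufficiently small. -/
theorem exp_stability_persists
    {X : Type*} [NormedAddCommGroup X] [NormedSpace ℂ X] [CompleteSpace X]
    (A C₁ : X →ₗ.[ℂ] X) (T T₁ : ℝ → X →L[ℂ] X) (M ω : ℝ)
    (hM : 1 ≤ M)
    (hgen : IsGenerator T A)
    (hbound : ∀ t : ℝ, 0 ≤ t → ‖T t‖ ≤ M * Real.exp (ω * t))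
    (hdom1 : C₁.domain = A.domain)
    (Rres : ℝ → X →L[ℂ] X)
    (hRres : ∀ μ : ℝ, ω < μ → IsResolventAt A (μ : ℂ) (Rres μ))
    (CR₁ : ℝ → X →L[ℂ] X)
    (hCR₁ : ∀ μ : ℝ, ω < μ → ∀ x : X, ∀ hx : Rres μ x ∈ C₁.domain,
      CR₁ μ x = C₁ ⟨Rres μ x, hx⟩)
    (hb₁ : BddAbove {r : ℝ | ∃ μ : ℝ, ω < μ ∧ r = (μ - ω) * ‖CR₁ μ‖})
    (hgen₁ : IsGenerator T₁ (A + C₁))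
    (hstab : ExpStable T₁) :
    ∃ ε : ℝ, 0 < ε ∧ ∀ C₂ : X →ₗ.[ℂ] X, C₂.domain = A.domain →
      ∀ CR₂ : ℝ → X →L[ℂ] X,
        (∀ μ : ℝ, ω < μ → ∀ x : X, ∀ hx : Rres μ x ∈ C₂.domain,
          CR₂ μ x = C₂ ⟨Rres μ x, hx⟩) →
        BddAbove {r : ℝ | ∃ μ : ℝ, ω < μ ∧ r = (μ - ω) * ‖CR₂ μ‖} →
        (1 / M) * sSup {r : ℝ | ∃ μ : ℝ, ω < μ ∧ r = (μ - ω) * ‖CR₁ μ - CR₂ μ‖} < ε →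
        ∀ T₂ : ℝ → X →L[ℂ] X, IsGenerator T₂ (A + C₂) → ExpStable T₂ := by
  classical
  obtain ⟨N, α, hN, hα, hNb⟩ := hstab
  set N₁ : ℝ := max N 1 with hN₁def
  have hN₁1 : (1:ℝ) ≤ N₁ := le_max_right _ _
  have hN₁0 : (0:ℝ) < N₁ := lt_of_lt_of_le one_pos hN₁1
  have hT₁N : ∀ τ : ℝ, 0 ≤ τ → ‖T₁ τ‖ ≤ N₁ := by
    intro τ hτ
    refine (hNb τ hτ).trans ?_
    have h1 : Real.exp (-α * τ) ≤ 1 := Real.exp_le_one_iff.mpr (by nlinarith)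
    calc N * Real.exp (-α * τ) ≤ N * 1 := by nlinarith [Real.exp_pos (-α * τ)]
      _ ≤ N₁ := by simp only [mul_one]; exact le_max_left N 1
  set t₀ : ℝ := max 1 (Real.log (4 * N₁) / α) with ht₀def
  have ht₀1 : (1:ℝ) ≤ t₀ := le_max_left _ _
  have ht₀0 : (0:ℝ) < t₀ := lt_of_lt_of_le one_pos ht₀1
  have hT₁quarter : ‖T₁ t₀‖ ≤ 1/4 := by
    have hlog : Real.log (4 * N₁) ≤ α * t₀ := by
      have := le_max_right 1 (Real.log (4 * N₁) / α)
      rw [div_le_iff₀ hα] at this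
      linarith [this]
    have hexp : Real.exp (-α * t₀) ≤ (4 * N₁)⁻¹ := by
      rw [show (-α * t₀ : ℝ) = -(α * t₀) by ring, Real.exp_neg]
      rw [show ((4:ℝ) * N₁)⁻¹ = (Real.exp (Real.log (4 * N₁)))⁻¹ by
        rw [Real.exp_log (by positivity)]]
      exact inv_anti₀ (Real.exp_pos _) (Real.exp_le_exp.mpr hlog)
    calc ‖T₁ t₀‖ ≤ N * Real.exp (-α * t₀) := hNb t₀ ht₀0.le
      _ ≤ N₁ * (4 * N₁)⁻¹ := by
          apply mul_le_mul (le_max_left N 1) hexp (Real.exp_pos _).le hN₁0.le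
      _ = 1/4 := by field_simp
  refine ⟨1 / (8 * t₀ * N₁^2 * M + 1), by positivity, ?_⟩
  set ε : ℝ := 1 / (8 * t₀ * N₁^2 * M + 1) with hεdef
  have hε0 : 0 < ε := by positivity
  have hεsmall : 2 * t₀ * N₁^2 * M * ε ≤ 1/4 := by
    rw [hεdef, mul_one_div, div_le_div_iff₀ (by positivity) (by norm_num)]
    nlinarith [ht₀0.le, hN₁0.le, sq_nonneg N₁, mul_pos ht₀0 (mul_pos (mul_pos hN₁0 hN₁0) (lt_of_lt_of_le one_pos hM))]
  intro C₂ hdom2 CR₂ hCR₂ hb₂ hε T₂ hgen₂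
  have hGdom₂ : (A + C₂).domain = A.domain := by
    rw [LinearPMap.add_domain, hdom2, inf_idem]
  have hGdom₁ : (A + C₁).domain = A.domain := by
    rw [LinearPMap.add_domain, hdom1, inf_idem]
  set Sd : ℝ := sSup {r : ℝ | ∃ μ : ℝ, ω < μ ∧ r = (μ - ω) * ‖CR₁ μ - CR₂ μ‖} with hSddef
  have hM0 : (0:ℝ) < M := lt_of_lt_of_le one_pos hM
  have hSdlt : Sd < M * ε := by
    rw [one_div, inv_mul_eq_div, div_lt_iff₀ hM0] at hε
    linarith [hε]
  have hbdiff : BddAbove {r : ℝ | ∃ μ : ℝ, ω < μ ∧ r = (μ - ω) * ‖CR₁ μ - CR₂ μ‖} := by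
    obtain ⟨B₁, hB₁⟩ := hb₁
    obtain ⟨B₂, hB₂⟩ := hb₂
    refine ⟨B₁ + B₂, ?_⟩
    rintro r ⟨μ, hμ, rfl⟩
    have h₁ : (μ - ω) * ‖CR₁ μ‖ ≤ B₁ := hB₁ ⟨μ, hμ, rfl⟩
    have h₂ : (μ - ω) * ‖CR₂ μ‖ ≤ B₂ := hB₂ ⟨μ, hμ, rfl⟩
    have h3 : ‖CR₁ μ - CR₂ μ‖ ≤ ‖CR₁ μ‖ + ‖CR₂ μ‖ := norm_sub_le _ _
    nlinarith [sub_pos.mpr hμ, norm_nonneg (CR₁ μ), norm_nonneg (CR₂ μ)]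
  have hSd0 : 0 ≤ Sd := by
    have hmem : (ω + 1 - ω) * ‖CR₁ (ω+1) - CR₂ (ω+1)‖ ∈
        {r : ℝ | ∃ μ : ℝ, ω < μ ∧ r = (μ - ω) * ‖CR₁ μ - CR₂ μ‖} := ⟨ω+1, by linarith, rfl⟩
    have hle := le_csSup hbdiff hmem
    have h0 : (0:ℝ) ≤ (ω + 1 - ω) * ‖CR₁ (ω+1) - CR₂ (ω+1)‖ := by
      have : (0:ℝ) ≤ ‖CR₁ (ω+1) - CR₂ (ω+1)‖ := norm_nonneg _
      nlinarith
    linarith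
  have hCdiff : ∀ z : X, ∀ hzA : z ∈ A.domain, ∀ hz1 : z ∈ C₁.domain, ∀ hz2 : z ∈ C₂.domain,
      ‖(C₂ ⟨z, hz2⟩ : X) - C₁ ⟨z, hz1⟩‖ ≤ Sd * ‖z‖ := by
    intro z hzA hz1 hz2
    set c : ℝ := ‖(A ⟨z, hzA⟩ : X)‖ with hcdef
    have key : ∀ μ : ℝ, max ω 0 < μ →
        ‖(C₂ ⟨z, hz2⟩ : X) - C₁ ⟨z, hz1⟩‖ ≤ Sd * ((μ * ‖z‖ + c) / (μ - ω)) := by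
      intro μ hμ
      have hμω : ω < μ := lt_of_le_of_lt (le_max_left _ _) hμ
      have hμ0 : (0:ℝ) < μ := lt_of_le_of_lt (le_max_right _ _) hμ
      set w : X := (μ:ℂ) • z - A ⟨z, hzA⟩ with hwdef
      have hw : Rres μ w = z := (hRres μ hμω).2 ⟨z, hzA⟩
      have hz1' : Rres μ w ∈ C₁.domain := by rw [hw, hdom1]; exact hzA
      have hz2' : Rres μ w ∈ C₂.domain := by rw [hw, hdom2]; exact hzA
      have e1 : CR₁ μ w = C₁ ⟨z, hz1⟩ := by
        rw [hCR₁ μ hμω w hz1']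
        exact congrArg _ (Subtype.ext hw)
      have e2 : CR₂ μ w = C₂ ⟨z, hz2⟩ := by
        rw [hCR₂ μ hμω w hz2']
        exact congrArg _ (Subtype.ext hw)
      have ediff : (C₂ ⟨z, hz2⟩ : X) - C₁ ⟨z, hz1⟩ = (CR₂ μ - CR₁ μ) w := by
        rw [ContinuousLinearMap.sub_apply, e1, e2]
      have hnorm1 : ‖(CR₂ μ - CR₁ μ) w‖ ≤ ‖CR₁ μ - CR₂ μ‖ * ‖w‖ := by
        calc ‖(CR₂ μ - CR₁ μ) w‖ ≤ ‖CR₂ μ - CR₁ μ‖ * ‖w‖ :=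
              ContinuousLinearMap.le_opNorm _ _
          _ = ‖CR₁ μ - CR₂ μ‖ * ‖w‖ := by rw [norm_sub_rev]
      have hCRbd : ‖CR₁ μ - CR₂ μ‖ ≤ Sd / (μ - ω) := by
        have hle : (μ - ω) * ‖CR₁ μ - CR₂ μ‖ ≤ Sd := le_csSup hbdiff ⟨μ, hμω, rfl⟩
        rw [le_div_iff₀ (by linarith), mul_comm]
        exact hle
      have hwnorm : ‖w‖ ≤ μ * ‖z‖ + c := by
        refine (norm_sub_le _ _).trans ?_
        have hn : ‖(μ:ℂ) • z‖ = μ * ‖z‖ := by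
          rw [norm_smul, Complex.norm_real, Real.norm_eq_abs, abs_of_pos hμ0]
        rw [hn]
      calc ‖(C₂ ⟨z, hz2⟩ : X) - C₁ ⟨z, hz1⟩‖ = ‖(CR₂ μ - CR₁ μ) w‖ := by rw [ediff]
        _ ≤ ‖CR₁ μ - CR₂ μ‖ * ‖w‖ := hnorm1
        _ ≤ (Sd / (μ - ω)) * (μ * ‖z‖ + c) := by
            apply mul_le_mul hCRbd hwnorm (norm_nonneg _) (div_nonneg hSd0 (by linarith))
        _ = Sd * ((μ * ‖z‖ + c) / (μ - ω)) := by ring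
    have htend : Tendsto (fun μ : ℝ => Sd * ((μ * ‖z‖ + c) / (μ - ω))) atTop
        (𝓝 (Sd * ‖z‖)) := by
      have h1 : Tendsto (fun μ : ℝ => (c + ω * ‖z‖) / (μ - ω)) atTop (𝓝 0) :=
        Tendsto.div_atTop tendsto_const_nhds (tendsto_atTop_add_const_right _ _ tendsto_id)
      have h2 : Tendsto (fun μ : ℝ => Sd * (‖z‖ + (c + ω * ‖z‖) / (μ - ω))) atTop
          (𝓝 (Sd * (‖z‖ + 0))) := (tendsto_const_nhds.add h1).const_mul Sd
      rw [add_zero] at h2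
      refine h2.congr' ?_
      filter_upwards [eventually_gt_atTop ω] with μ hμ
      have hne : μ - ω ≠ 0 := ne_of_gt (by linarith)
      show Sd * (‖z‖ + (c + ω * ‖z‖) / (μ - ω)) = Sd * ((μ * ‖z‖ + c) / (μ - ω))
      congr 1
      field_simp
      ring
    refine ge_of_tendsto htend ?_
    filter_upwards [eventually_gt_atTop (max ω 0)] with μ hμ
    exact key μ hμ
  -- uniform bound for T₂ on [0, t₀]
  obtain ⟨Cb, hCb0, hCb⟩ := c0_bound_Icc hgen₂.1 t₀
  set SupSet : Set ℝ := (fun u => ‖T₂ u‖) '' Set.Icc (0:ℝ) t₀ with hSupSetdef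
  have hSbdd : BddAbove SupSet := by
    refine ⟨Cb, ?_⟩
    rintro r ⟨u, hu, rfl⟩
    exact hCb u hu
  have hSne : SupSet.Nonempty := ⟨‖T₂ 0‖, ⟨0, ⟨le_rfl, ht₀0.le⟩, rfl⟩⟩
  set Msup : ℝ := sSup SupSet with hMsupdef
  have hMle : ∀ u ∈ Set.Icc (0:ℝ) t₀, ‖T₂ u‖ ≤ Msup := fun u hu => le_csSup hSbdd ⟨u, hu, rfl⟩
  have hMsup0 : 0 ≤ Msup := le_trans (norm_nonneg _) (hMle 0 ⟨le_rfl, ht₀0.le⟩)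
  -- the bounded difference operator
  set Dz : X → X := fun w => if h : w ∈ A.domain then
      ((C₂ ⟨w, by rw [hdom2]; exact h⟩ : X) - C₁ ⟨w, by rw [hdom1]; exact h⟩) else 0 with hDzdef
  have hDbd : ∀ w : X, ‖Dz w‖ ≤ Sd * ‖w‖ := by
    intro w
    by_cases h : w ∈ A.domain
    · rw [hDzdef]
      simp only [dif_pos h]
      exact hCdiff w h (by rw [hdom1]; exact h) (by rw [hdom2]; exact h)
    · rw [hDzdef]
      simp only [dif_neg h, norm_zero]
      positivity
  -- the key difference estimate
  have keydiff : ∀ t : ℝ, t ∈ Set.Icc (0:ℝ) t₀ → ∀ z : X, z ∈ (A + C₂).domain →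
      ‖T₂ t z - T₁ t z‖ ≤ N₁ * (Sd * Msup) * t * ‖z‖ := by
    intro t ht z hz
    set x : ((A + C₂).domain) := ⟨z, hz⟩ with hxdef
    have hderiv : ∀ u ∈ Set.Icc (0:ℝ) t, HasDerivWithinAt (fun v => T₁ (t - v) (T₂ v (x:X)))
        (T₁ (t - u) (Dz (T₂ u (x:X)))) (Set.Icc 0 t) u := by
      intro u hu
      obtain ⟨hu0, hut⟩ := hu
      obtain ⟨m₂, -⟩ := gen_invariant hgen₂ x hu0
      have hzA' : T₂ u (x:X) ∈ A.domain := by rw [← hGdom₂]; exact m₂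
      have m₁ : T₂ u (x:X) ∈ (A + C₁).domain := by rw [hGdom₁]; exact hzA'
      have hd := keyDeriv hgen₁ hgen₂ x ⟨hu0, hut⟩ m₂ m₁
      have hc1 : T₂ u (x:X) ∈ C₁.domain := by rw [hdom1]; exact hzA'
      have hc2 : T₂ u (x:X) ∈ C₂.domain := by rw [hdom2]; exact hzA'
      have hval : ((A + C₂) ⟨T₂ u (x:X), m₂⟩ : X) - (A + C₁) ⟨T₂ u (x:X), m₁⟩
          = Dz (T₂ u (x:X)) := by
        rw [add_sub_apply A C₂ C₁ m₂ m₁ hzA' hc2 hc1, hDzdef]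
        simp only [dif_pos hzA']
      rwa [hval] at hd
    have hφbd : ∀ u ∈ Set.Icc (0:ℝ) t, ‖T₁ (t - u) (Dz (T₂ u (x:X)))‖
        ≤ N₁ * (Sd * Msup) * ‖z‖ := by
      intro u hu
      obtain ⟨hu0, hut⟩ := hu
      have h1 : ‖T₁ (t - u) (Dz (T₂ u (x:X)))‖ ≤ N₁ * ‖Dz (T₂ u (x:X))‖ :=
        le_trans ((T₁ (t-u)).le_opNorm _)
          (mul_le_mul_of_nonneg_right (hT₁N _ (by linarith)) (norm_nonneg _))
      have h2 : ‖Dz (T₂ u (x:X))‖ ≤ Sd * ‖T₂ u (x:X)‖ := hDbd _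
      have h3 : ‖T₂ u (x:X)‖ ≤ Msup * ‖z‖ := by
        have hap := (T₂ u).le_opNorm (x:X)
        have hMu := hMle u ⟨hu0, le_trans hut ht.2⟩
        calc ‖T₂ u (x:X)‖ ≤ ‖T₂ u‖ * ‖z‖ := hap
          _ ≤ Msup * ‖z‖ := mul_le_mul_of_nonneg_right hMu (norm_nonneg z)
      calc ‖T₁ (t - u) (Dz (T₂ u (x:X)))‖ ≤ N₁ * ‖Dz (T₂ u (x:X))‖ := h1
        _ ≤ N₁ * (Sd * ‖T₂ u (x:X)‖) := mul_le_mul_of_nonneg_left h2 hN₁0.le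
        _ ≤ N₁ * (Sd * (Msup * ‖z‖)) :=
            mul_le_mul_of_nonneg_left (mul_le_mul_of_nonneg_left h3 hSd0) hN₁0.le
        _ = N₁ * (Sd * Msup) * ‖z‖ := by ring
    have hMVT := (convex_Icc (0:ℝ) t).norm_image_sub_le_of_norm_hasDerivWithin_le
      hderiv hφbd ⟨le_rfl, ht.1⟩ ⟨ht.1, le_rfl⟩
    have hft : T₁ (t - t) (T₂ t (x:X)) = T₂ t z := by
      rw [sub_self, hgen₁.1.1]
      rfl
    have hf0 : T₁ (t - 0) (T₂ 0 (x:X)) = T₁ t z := by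
      rw [sub_zero, hgen₂.1.1]
      rfl
    rw [hft, hf0] at hMVT
    calc ‖T₂ t z - T₁ t z‖ ≤ N₁ * (Sd * Msup) * ‖z‖ * ‖t - 0‖ := hMVT
      _ = N₁ * (Sd * Msup) * t * ‖z‖ := by
          rw [sub_zero, Real.norm_eq_abs, abs_of_nonneg ht.1]
          ring
  -- pass to operator norms by density
  have hdense : Dense ((A + C₂).domain : Set X) := gen_dense hgen₂
  have hopdiff : ∀ t ∈ Set.Icc (0:ℝ) t₀, ‖T₂ t - T₁ t‖ ≤ N₁ * (Sd * Msup) * t := by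
    intro t ht
    refine opnorm_le_of_dense hdense ?_ ?_
    · exact mul_nonneg (mul_nonneg hN₁0.le (mul_nonneg hSd0 hMsup0)) ht.1
    · intro z hzmem
      have hk := keydiff t ht z hzmem
      calc ‖(T₂ t - T₁ t) z‖ = ‖T₂ t z - T₁ t z‖ := by rw [ContinuousLinearMap.sub_apply]
        _ ≤ N₁ * (Sd * Msup) * t * ‖z‖ := hk
  -- bootstrap bound for Msup
  have hκ : t₀ * N₁ * Sd ≤ 1/2 := by
    have e1 : t₀ * N₁ * Sd ≤ t₀ * N₁ * (M * ε) :=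
      mul_le_mul_of_nonneg_left hSdlt.le (by positivity)
    have e2 : 2 * N₁ * (t₀ * N₁ * (M * ε)) ≤ 1/4 := by
      have e3 : 2 * N₁ * (t₀ * N₁ * (M * ε)) = 2 * t₀ * N₁^2 * M * ε := by ring
      rw [e3]
      exact hεsmall
    nlinarith [hN₁1, mul_pos (mul_pos ht₀0 hN₁0) (mul_pos hM0 hε0)]
  have hMsup2 : Msup ≤ 2 * N₁ := by
    have hcs : Msup ≤ N₁ + N₁ * (Sd * Msup) * t₀ := by
      refine csSup_le hSne ?_
      rintro r ⟨u, hu, rfl⟩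
      calc ‖T₂ u‖ = ‖T₁ u + (T₂ u - T₁ u)‖ := by
            rw [show T₁ u + (T₂ u - T₁ u) = T₂ u from by abel]
        _ ≤ ‖T₁ u‖ + ‖T₂ u - T₁ u‖ := norm_add_le _ _
        _ ≤ N₁ + N₁ * (Sd * Msup) * t₀ := by
            refine add_le_add (hT₁N u hu.1) ?_
            refine (hopdiff u hu).trans ?_
            exact mul_le_mul_of_nonneg_left hu.2
              (mul_nonneg hN₁0.le (mul_nonneg hSd0 hMsup0))
    have hprod : N₁ * (Sd * Msup) * t₀ ≤ (1/2) * Msup := by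
      have : N₁ * (Sd * Msup) * t₀ = (t₀ * N₁ * Sd) * Msup := by ring
      rw [this]
      exact mul_le_mul_of_nonneg_right hκ hMsup0
    linarith
  -- contraction at time t₀
  have hhalf : ‖T₂ t₀‖ ≤ 1/2 := by
    have hdiffbd : N₁ * (Sd * Msup) * t₀ ≤ 1/4 := by
      have b1 : Sd * Msup ≤ (M * ε) * (2 * N₁) :=
        mul_le_mul hSdlt.le hMsup2 hMsup0 (by positivity)
      have b2 : N₁ * (Sd * Msup) * t₀ ≤ N₁ * ((M * ε) * (2 * N₁)) * t₀ :=
        mul_le_mul_of_nonneg_right (mul_le_mul_of_nonneg_left b1 hN₁0.le) ht₀0.le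
      have b3 : N₁ * ((M * ε) * (2 * N₁)) * t₀ = 2 * t₀ * N₁^2 * M * ε := by ring
      linarith [hεsmall, b2, b3.le, b3.ge]
    calc ‖T₂ t₀‖ = ‖T₁ t₀ + (T₂ t₀ - T₁ t₀)‖ := by
          rw [show T₁ t₀ + (T₂ t₀ - T₁ t₀) = T₂ t₀ from by abel]
      _ ≤ ‖T₁ t₀‖ + ‖T₂ t₀ - T₁ t₀‖ := norm_add_le _ _
      _ ≤ 1/4 + 1/4 := add_le_add hT₁quarter ((hopdiff t₀ ⟨ht₀0.le, le_rfl⟩).trans hdiffbd)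
      _ = 1/2 := by norm_num
  -- conclude exponential stability
  refine ⟨4 * N₁, Real.log 2 / t₀, by positivity, ?_, ?_⟩
  · exact div_pos (Real.log_pos one_lt_two) ht₀0
  intro t htpos
  clear_value Dz Msup Sd ε N₁ t₀
  clear hDbd hDzdef keydiff hopdiff hdense hCdiff Dz
  clear hMsupdef hSbdd hSne
  clear_value SupSet
  clear hSupSetdef SupSet
  clear hCb hCb0 Cb hbdiff hSdlt hSd0 hSddef hε hεsmall hε0 hεdef ε
  clear hCR₂ hb₂ hCR₁ hb₁ hRres hbound hgen hNb
  set n : ℕ := ⌊t / t₀⌋₊ with hndef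
  set r : ℝ := t - n * t₀ with hrdef
  have hn1 : (n:ℝ) ≤ t / t₀ := Nat.floor_le (div_nonneg htpos ht₀0.le)
  have hn2 : t / t₀ < n + 1 := Nat.lt_floor_add_one _
  have hr0 : 0 ≤ r := by
    rw [hrdef]
    have := (le_div_iff₀ ht₀0).mp hn1
    linarith
  have hrt₀ : r ≤ t₀ := by
    rw [hrdef]
    have h1 := (div_lt_iff₀ ht₀0).mp hn2
    have h2 : ((n:ℝ) + 1) * t₀ = (n:ℝ) * t₀ + t₀ := by ring
    linarith
  have heq : r + n * t₀ = t := by rw [hrdef]; ring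
  clear_value n r
  have hb := c0_pow_bound hgen₂.1 ht₀0.le n r hr0
  have hTr : ‖T₂ r‖ ≤ 2 * N₁ := le_trans (hMle r ⟨hr0, hrt₀⟩) hMsup2
  have hpow : ‖T₂ t₀‖ ^ n ≤ (1/2 : ℝ) ^ n := pow_le_pow_left₀ (norm_nonneg _) hhalf n
  have hkey : ((1:ℝ)/2) ^ n ≤ 2 * Real.exp (-(Real.log 2 / t₀) * t) := by
    have hlog2 : 0 < Real.log 2 := Real.log_pos one_lt_two
    have e1 : ((1:ℝ)/2) ^ n = Real.exp (-((n:ℝ) * Real.log 2)) := by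
      rw [Real.exp_neg, Real.exp_nat_mul, Real.exp_log two_pos, one_div, inv_pow]
    have e2 : -((n:ℝ) * Real.log 2) ≤ -(t/t₀ - 1) * Real.log 2 := by
      have hge : t/t₀ - 1 ≤ (n:ℝ) := by linarith
      have hmulz := mul_le_mul_of_nonneg_right hge hlog2.le
      linarith
    calc ((1:ℝ)/2) ^ n = Real.exp (-((n:ℝ) * Real.log 2)) := e1
      _ ≤ Real.exp (-(t/t₀ - 1) * Real.log 2) := Real.exp_le_exp.mpr e2
      _ = 2 * Real.exp (-(Real.log 2 / t₀) * t) := by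
          rw [show (-(t/t₀ - 1) * Real.log 2 : ℝ)
              = Real.log 2 + -(Real.log 2 / t₀) * t by field_simp; ring]
          rw [Real.exp_add, Real.exp_log two_pos]
  calc ‖T₂ t‖ = ‖T₂ (r + n * t₀)‖ := by rw [heq]
    _ ≤ ‖T₂ r‖ * ‖T₂ t₀‖ ^ n := hb
    _ ≤ (2 * N₁) * ((1/2 : ℝ) ^ n) :=
        mul_le_mul hTr hpow (pow_nonneg (norm_nonneg _) n) (by positivity)
    _ ≤ (2 * N₁) * (2 * Real.exp (-(Real.log 2 / t₀) * t)) :=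
        mul_le_mul_of_nonneg_left hkey (by positivity)
    _ = 4 * N₁ * Real.exp (-(Real.log 2 / t₀) * t) := by ring
end

section
/- Let A generate a C₀-semigroup on X with ‖T_A(t)‖ ≤ Me^{ωt}, and let C ∈ GL_A(X) with norm ‖C‖_A := (1/M) sup_{μ>ω}(μ−ω)‖C R(μ,A)‖. Then for every μ > ω + M²‖C‖_A, μ ∈ ρ(A+C) and ‖R(μ, A+C)‖ ≤ M/(μ − (ω + M²‖C‖_A)). -/
open Filter Topology

variable {X : Type*} [NormedAddCommGroup X] [NormedSpace ℂ X] [CompleteSpace X]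

open MeasureTheory Set in
private theorem resolvent_norm_bound
    (A : X →ₗ.[ℂ] X) (T : ℝ → X →L[ℂ] X) (M ω : ℝ)
    (hgen : IsGenerator T A)
    (hbound : ∀ t : ℝ, 0 ≤ t → ‖T t‖ ≤ M * Real.exp (ω * t))
    (hM0 : 0 ≤ M)
    {μ : ℝ} (hμ : ω < μ) {r : X →L[ℂ] X} (hr : IsResolventAt A (μ : ℂ) r) :
    ‖r‖ ≤ M / (μ - ω) := by
  obtain ⟨hT0, hTadd, hTcont⟩ := hgen.1
  have hb0 : (0:ℝ) < μ - ω := by linarith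
  set g : X → ℝ → X := fun x t => Real.exp (-μ * t) • T t x with hgdef
  have hgcont : ∀ x, ContinuousOn (g x) (Set.Ici 0) := fun x =>
    ((Real.continuous_exp.comp (continuous_const.mul continuous_id)).continuousOn).smul (hTcont x)
  have hgbound : ∀ x : X, ∀ t : ℝ, 0 ≤ t →
      ‖g x t‖ ≤ M * ‖x‖ * Real.exp (-(μ - ω) * t) := by
    intro x t ht
    have h1 : ‖T t x‖ ≤ M * Real.exp (ω * t) * ‖x‖ :=
      le_trans ((T t).le_opNorm x)
        (mul_le_mul_of_nonneg_right (hbound t ht) (norm_nonneg x))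
    have h2 : ‖g x t‖ = Real.exp (-μ * t) * ‖T t x‖ := by
      simp [hgdef, norm_smul, Real.abs_exp]
    have h3 : Real.exp (-μ * t) * Real.exp (ω * t) = Real.exp (-(μ - ω) * t) := by
      rw [← Real.exp_add]; ring_nf
    calc ‖g x t‖ = Real.exp (-μ * t) * ‖T t x‖ := h2
      _ ≤ Real.exp (-μ * t) * (M * Real.exp (ω * t) * ‖x‖) :=
          mul_le_mul_of_nonneg_left h1 (Real.exp_pos _).le
      _ = M * ‖x‖ * (Real.exp (-μ * t) * Real.exp (ω * t)) := by ring
      _ = M * ‖x‖ * Real.exp (-(μ - ω) * t) := by rw [h3]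
  have hdomint : ∀ x : X, IntegrableOn (fun t => M * ‖x‖ * Real.exp (-(μ - ω) * t))
      (Set.Ioi 0) := fun x => (exp_neg_integrableOn_Ioi 0 hb0).const_mul _
  have hgint : ∀ x : X, IntegrableOn (g x) (Set.Ioi 0) := by
    intro x
    refine Integrable.mono' (hdomint x)
      (((hgcont x).mono Set.Ioi_subset_Ici_self).aestronglyMeasurable measurableSet_Ioi) ?_
    filter_upwards [ae_restrict_mem measurableSet_Ioi] with t ht
    exact hgbound x t (le_of_lt ht)
  have hexpint : ∫ t in Set.Ioi (0:ℝ), Real.exp (-(μ - ω) * t) = (μ - ω)⁻¹ := by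
    have h := integral_comp_mul_left_Ioi (fun s => Real.exp (-s)) 0 hb0
    simp only [mul_zero, integral_exp_neg_Ioi, neg_zero, Real.exp_zero, smul_eq_mul,
      mul_one] at h
    rw [← h]
    congr 1 with t
    rw [neg_mul]
  -- the Laplace transform equals the resolvent
  have key : ∀ x : X, r x = ∫ t in Set.Ioi (0:ℝ), g x t := by
    intro x
    set I : X := ∫ t in Set.Ioi (0:ℝ), g x t with hI
    set F : ℝ → X := fun u => ∫ s in (0:ℝ)..u, g x s with hF
    -- FTC at 0
    have hFderiv : HasDerivWithinAt F (g x 0) (Set.Ici 0) 0 := by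
      refine intervalIntegral.integral_hasDerivWithinAt_right ?_ ?_ ?_
      · exact IntervalIntegrable.refl
      · exact ⟨Set.Ioi 0, self_mem_nhdsWithin,
          ((hgcont x).mono Set.Ioi_subset_Ici_self).aestronglyMeasurable measurableSet_Ioi⟩
      · exact ((hgcont x) 0 Set.self_mem_Ici).mono Set.Ioi_subset_Ici_self
    have hg0 : g x 0 = x := by simp [hgdef, hT0]
    have hFtend : Tendsto (fun t : ℝ => t⁻¹ • F t) (𝓝[>] 0) (𝓝 x) := by
      have h1 := hasDerivWithinAt_iff_tendsto_slope.mp hFderiv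
      rw [hg0, Set.Ici_sdiff_left] at h1
      refine h1.congr (fun t => ?_)
      simp [slope_def_module, hF, intervalIntegral.integral_same]
    have hF0 : Tendsto F (𝓝[>] 0) (𝓝 0) := by
      have h2 : Tendsto (fun t : ℝ => t • (t⁻¹ • F t)) (𝓝[>] 0) (𝓝 ((0:ℝ) • x)) :=
        (tendsto_nhdsWithin_of_tendsto_nhds tendsto_id).smul hFtend
      rw [zero_smul] at h2
      refine h2.congr' ?_
      filter_upwards [self_mem_nhdsWithin] with t (ht : (0:ℝ) < t)
      rw [smul_smul, mul_inv_cancel₀ (ne_of_gt ht), one_smul]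
    have hexp : Tendsto (fun t : ℝ => t⁻¹ * (Real.exp (μ * t) - 1)) (𝓝[>] 0) (𝓝 μ) := by
      have hd : HasDerivAt (fun t : ℝ => Real.exp (μ * t)) μ 0 := by
        have := ((hasDerivAt_id (0:ℝ)).const_mul μ).exp
        simpa using this
      have h1 := hasDerivAt_iff_tendsto_slope.mp hd
      have h2 : 𝓝[>] (0:ℝ) ≤ 𝓝[≠] (0:ℝ) :=
        nhdsWithin_mono 0 (fun t ht => ne_of_gt ht)
      refine (h1.mono_left h2).congr (fun t => ?_)
      simp [slope_def_field]
      ring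
    -- splitting of the integral
    have hsplit : ∀ t : ℝ, 0 < t → (∫ s in Set.Ioi t, g x s) = I - F t := by
      intro t ht
      have hu : (∫ s in Set.Ioc 0 t, g x s) + ∫ s in Set.Ioi t, g x s = I := by
        rw [← setIntegral_union (Set.Ioc_disjoint_Ioi le_rfl) measurableSet_Ioi
          ((hgint x).mono_set (fun s hs => hs.1))
          ((hgint x).mono_set (fun s hs => lt_trans ht hs)),
          Set.Ioc_union_Ioi_eq_Ioi ht.le]
      have hFt : F t = ∫ s in Set.Ioc 0 t, g x s := intervalIntegral.integral_of_le ht.le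
      rw [hFt]
      rw [eq_sub_iff_add_eq, add_comm]
      exact hu
    have hshift : ∀ t : ℝ, (∫ s in Set.Ioi (0:ℝ), g x (s + t)) = ∫ s in Set.Ioi t, g x s := by
      intro t
      have h1 := (measurePreserving_add_right volume t).setIntegral_image_emb
        (measurableEmbedding_addRight t) (g x) (Set.Ioi 0)
      rw [Set.image_add_const_Ioi, zero_add] at h1
      exact h1.symm
    -- main identity for T t I
    have hTtI : ∀ t : ℝ, 0 < t → T t I = Real.exp (μ * t) • (I - F t) := by
      intro t ht
      have h1 : T t I = ∫ s in Set.Ioi (0:ℝ), T t (g x s) :=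
        (ContinuousLinearMap.integral_comp_comm (T t) (hgint x)).symm
      have h2 : ∀ s ∈ Set.Ioi (0:ℝ), T t (g x s) = Real.exp (μ * t) • g x (s + t) := by
        intro s hs
        have hts : T (t + s) = T t ∘L T s := hTadd t s ht.le (le_of_lt hs)
        have h3 : T t (g x s) = Real.exp (-μ * s) • T (t + s) x := by
          rw [hgdef]
          simp only
          rw [(T t).map_smul_of_tower, hts]
          rfl
        rw [h3, hgdef]
        simp only
        rw [smul_smul, ← Real.exp_add, add_comm t s]
        congr 1
        ring
      calc T t I = ∫ s in Set.Ioi (0:ℝ), T t (g x s) := h1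
        _ = ∫ s in Set.Ioi (0:ℝ), Real.exp (μ * t) • g x (s + t) :=
            setIntegral_congr_fun measurableSet_Ioi h2
        _ = Real.exp (μ * t) • ∫ s in Set.Ioi (0:ℝ), g x (s + t) := integral_smul _ _
        _ = Real.exp (μ * t) • (I - F t) := by rw [hshift t, hsplit t ht]
    -- the difference quotient
    have htend : Tendsto (fun t : ℝ => (t : ℂ)⁻¹ • (T t I - I)) (𝓝[>] 0)
        (𝓝 ((μ : ℂ) • I - x)) := by
      have hlim : Tendsto (fun t : ℝ =>
          (t⁻¹ * (Real.exp (μ * t) - 1)) • (I - F t) - t⁻¹ • F t) (𝓝[>] 0)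
          (𝓝 (μ • I - x)) := by
        have h1 : Tendsto (fun t : ℝ => I - F t) (𝓝[>] 0) (𝓝 (I - 0)) :=
          tendsto_const_nhds.sub hF0
        rw [sub_zero] at h1
        exact (hexp.smul h1).sub hFtend
      have hco : ((μ : ℂ) • I - x : X) = (μ • I - x : X) := by
        rw [Complex.coe_smul]
      rw [hco]
      refine hlim.congr' ?_
      filter_upwards [self_mem_nhdsWithin] with t (ht : (0:ℝ) < t)
      have e1 : T t I - I = (Real.exp (μ * t) - 1) • (I - F t) - F t := by
        rw [hTtI t ht, sub_smul, one_smul]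
        abel
      have e2 : ((t : ℂ))⁻¹ = ((t⁻¹ : ℝ) : ℂ) := (Complex.ofReal_inv t).symm
      rw [e1, e2, Complex.coe_smul]
      module
    -- conclude membership and value
    have hmem : I ∈ A.domain := hgen.2.2 I ⟨(μ : ℂ) • I - x, htend⟩
    have hAval : A ⟨I, hmem⟩ = (μ : ℂ) • I - x :=
      tendsto_nhds_unique (hgen.2.1 ⟨I, hmem⟩) htend
    have h2 := hr.2 ⟨I, hmem⟩
    rw [hAval] at h2
    simp only [sub_sub_cancel] at h2
    exact h2
  -- now the norm bound
  refine r.opNorm_le_bound (div_nonneg hM0 hb0.le) (fun x => ?_)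
  rw [key x]
  have h1 : ‖∫ t in Set.Ioi (0:ℝ), g x t‖ ≤
      ∫ t in Set.Ioi (0:ℝ), M * ‖x‖ * Real.exp (-(μ - ω) * t) := by
    refine norm_integral_le_of_norm_le (hdomint x) ?_
    filter_upwards [ae_restrict_mem measurableSet_Ioi] with t ht
    exact hgbound x t (le_of_lt ht)
  have h2 : ∫ t in Set.Ioi (0:ℝ), M * ‖x‖ * Real.exp (-(μ - ω) * t)
      = M * ‖x‖ * (μ - ω)⁻¹ := by
    rw [MeasureTheory.integral_const_mul, hexpint]
  rw [h2] at h1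
  calc ‖∫ t in Set.Ioi (0:ℝ), g x t‖ ≤ M * ‖x‖ * (μ - ω)⁻¹ := h1
    _ = M / (μ - ω) * ‖x‖ := by ring

/-- For `C ∈ GL_A(X)` one has `μ ∈ ρ(A+C)` and `‖R(μ,A+C)‖ ≤ M/(μ-(ω+M²‖C‖_A))` for all
`μ > ω + M²‖C‖_A`. -/
theorem perturbed_resolvent_bound_GL_A
    {X : Type*} [NormedAddCommGroup X] [NormedSpace ℂ X] [CompleteSpace X]
    (A C : X →ₗ.[ℂ] X) (T : ℝ → X →L[ℂ] X) (M ω : ℝ)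
    (hM : 1 ≤ M)
    (hgen : IsGenerator T A)
    (hbound : ∀ t : ℝ, 0 ≤ t → ‖T t‖ ≤ M * Real.exp (ω * t))
    (hdom : C.domain = A.domain)
    (Rres : ℝ → X →L[ℂ] X)
    (hRres : ∀ μ : ℝ, ω < μ → IsResolventAt A (μ : ℂ) (Rres μ))
    (CR : ℝ → X →L[ℂ] X)
    (hCRdef : ∀ μ : ℝ, ω < μ → ∀ x : X, ∀ hx : Rres μ x ∈ C.domain,
      CR μ x = C ⟨Rres μ x, hx⟩)
    (hb : BddAbove {r : ℝ | ∃ μ : ℝ, ω < μ ∧ r = (μ - ω) * ‖CR μ‖})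
    (normA : ℝ)
    (hnormA : normA = (1 / M) * sSup {r : ℝ | ∃ μ : ℝ, ω < μ ∧ r = (μ - ω) * ‖CR μ‖}) :
    ∀ μ : ℝ, ω + M ^ 2 * normA < μ → ∃ R : X →L[ℂ] X,
      IsResolventAt (A + C) (μ : ℂ) R ∧ ‖R‖ ≤ M / (μ - (ω + M ^ 2 * normA)) := by
  have hM0 : (0:ℝ) < M := lt_of_lt_of_le one_pos hM
  set S := {r : ℝ | ∃ μ : ℝ, ω < μ ∧ r = (μ - ω) * ‖CR μ‖} with hS
  -- sSup S is nonnegative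
  have hmem1 : (ω + 1 - ω) * ‖CR (ω + 1)‖ ∈ S := ⟨ω + 1, by linarith, rfl⟩
  have hSup0 : 0 ≤ sSup S := le_trans (by nlinarith [norm_nonneg (CR (ω + 1))]) (le_csSup hb hmem1)
  have hnA0 : 0 ≤ normA := by
    rw [hnormA]; exact mul_nonneg (one_div_nonneg.mpr hM0.le) hSup0
  have hsupval : sSup S = M * normA := by
    rw [hnormA]; field_simp
  intro μ hμ2
  have hB0 : 0 ≤ M ^ 2 * normA := by positivity
  have hμ : ω < μ := by linarith
  have hbpos : (0:ℝ) < μ - ω := by linarith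
  have hcb : (μ - ω) * ‖CR μ‖ ≤ M * normA := by
    rw [← hsupval]; exact le_csSup hb ⟨μ, hμ, rfl⟩
  have hMa : M * normA ≤ M ^ 2 * normA := by nlinarith
  have hclt : ‖CR μ‖ < 1 := by
    have h1 : (μ - ω) * ‖CR μ‖ < μ - ω := by nlinarith
    nlinarith [norm_nonneg (CR μ)]
  set u : (X →L[ℂ] X)ˣ := Units.oneSub (CR μ) hclt with hu
  set v : X →L[ℂ] X := ↑u⁻¹ with hv
  have huval : (u : X →L[ℂ] X) = 1 - CR μ := rfl
  have hvu : ∀ z : X, (u : X →L[ℂ] X) (v z) = z := by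
    intro z; rw [hv]
    calc (u : X →L[ℂ] X) ((↑u⁻¹ : X →L[ℂ] X) z)
        = ((u : X →L[ℂ] X) * (↑u⁻¹ : X →L[ℂ] X)) z := rfl
      _ = z := by rw [u.mul_inv]; exact ContinuousLinearMap.one_apply z
  have huv : ∀ z : X, v ((u : X →L[ℂ] X) z) = z := by
    intro z; rw [hv]
    calc (↑u⁻¹ : X →L[ℂ] X) ((u : X →L[ℂ] X) z)
        = ((↑u⁻¹ : X →L[ℂ] X) * (u : X →L[ℂ] X)) z := rfl
      _ = z := by rw [u.inv_mul]; exact ContinuousLinearMap.one_apply z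
  -- norm bound on v
  have hvnorm : ‖v‖ ≤ (1 - ‖CR μ‖)⁻¹ := by
    have h1 : v = 1 + v * CR μ := by
      have h2 : v * ((1 : X →L[ℂ] X) - CR μ) = 1 := by
        rw [← huval]; exact u.inv_mul
      rw [mul_sub, mul_one] at h2
      rw [← h2]; abel
    have h3 : ‖v‖ ≤ 1 + ‖v‖ * ‖CR μ‖ := by
      calc ‖v‖ = ‖(1 : X →L[ℂ] X) + v * CR μ‖ := by rw [← h1]
        _ ≤ ‖(1 : X →L[ℂ] X)‖ + ‖v * CR μ‖ := norm_add_le _ _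
        _ ≤ 1 + ‖v‖ * ‖CR μ‖ := by
            gcongr
            · exact ContinuousLinearMap.norm_id_le
            · exact norm_mul_le v (CR μ)
    have h4 : (0:ℝ) < 1 - ‖CR μ‖ := by linarith
    rw [inv_eq_one_div, le_div_iff₀ h4]
    nlinarith [norm_nonneg v]
  set r : X →L[ℂ] X := Rres μ with hrdef
  have hrnorm : ‖r‖ ≤ M / (μ - ω) :=
    resolvent_norm_bound A T M ω hgen hbound hM0.le hμ (hRres μ hμ)
  refine ⟨r.comp v, ?_, ?_⟩
  · constructor
    · intro x
      obtain ⟨hy, hyeq⟩ := (hRres μ hμ).1 (v x)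
      have hyC : Rres μ (v x) ∈ C.domain := by rw [hdom]; exact hy
      have hmem : r.comp v x ∈ (A + C).domain := ⟨hy, hyC⟩
      refine ⟨hmem, ?_⟩
      have hadd : (A + C) ⟨r.comp v x, hmem⟩ = A ⟨r (v x), hy⟩ + C ⟨r (v x), hyC⟩ :=
        LinearPMap.add_apply A C ⟨r.comp v x, hmem⟩
      have hCval : C ⟨r (v x), hyC⟩ = CR μ (v x) := (hCRdef μ hμ (v x) hyC).symm
      have : (μ : ℂ) • r.comp v x - (A + C) ⟨r.comp v x, hmem⟩
          = ((μ : ℂ) • Rres μ (v x) - A ⟨Rres μ (v x), hy⟩) - CR μ (v x) := by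
        rw [hadd, hCval]
        simp only [ContinuousLinearMap.comp_apply, hrdef]
        abel
      rw [this, hyeq]
      have := hvu x
      rw [huval] at this
      simpa using this
    · intro y
      have hyA : (y : X) ∈ A.domain := y.2.1
      have hyC : (y : X) ∈ C.domain := y.2.2
      have hadd : (A + C) y = A ⟨y, hyA⟩ + C ⟨y, hyC⟩ := LinearPMap.add_apply A C y
      set w : X := (μ : ℂ) • (y : X) - A ⟨y, hyA⟩ with hw
      have hrw : Rres μ w = (y : X) := (hRres μ hμ).2 ⟨y, hyA⟩
      have hwC : Rres μ w ∈ C.domain := by rw [hrw]; exact hyC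
      have hCw : CR μ w = C ⟨y, hyC⟩ := by
        rw [hCRdef μ hμ w hwC]
        congr 1
        exact Subtype.ext hrw
      have harg : (μ : ℂ) • (y : X) - (A + C) y = (u : X →L[ℂ] X) w := by
        rw [hadd, huval]
        simp only [ContinuousLinearMap.sub_apply, ContinuousLinearMap.one_apply, hCw]
        rw [hw]; abel
      rw [harg]
      show r (v ((u : X →L[ℂ] X) w)) = (y : X)
      rw [huv w]
      exact hrw
  · have h1 : ‖r.comp v‖ ≤ ‖r‖ * ‖v‖ := r.opNorm_comp_le v
    have h2 : ‖r‖ * ‖v‖ ≤ (M / (μ - ω)) * (1 - ‖CR μ‖)⁻¹ :=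
      mul_le_mul hrnorm hvnorm (norm_nonneg v) (div_nonneg hM0.le hbpos.le)
    have h4 : (0:ℝ) < 1 - ‖CR μ‖ := by linarith
    have h5 : μ - (ω + M ^ 2 * normA) ≤ (μ - ω) * (1 - ‖CR μ‖) := by nlinarith
    have h6 : (0:ℝ) < μ - (ω + M ^ 2 * normA) := by linarith
    have h7 : (M / (μ - ω)) * (1 - ‖CR μ‖)⁻¹ = M / ((μ - ω) * (1 - ‖CR μ‖)) := by
      rw [div_eq_mul_inv, div_eq_mul_inv, mul_inv]
      ring
    have h8 : M / ((μ - ω) * (1 - ‖CR μ‖)) ≤ M / (μ - (ω + M ^ 2 * normA)) :=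
      div_le_div_of_nonneg_left hM0.le h6 h5  -- check signature
    linarith
end
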